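/- arXiv:1809.03154 — 3 statements merged into one kernel-verified Lean document; each statement's English description precedes it below -/
import Mathlib

section
/- Let P_1, ..., P_n be real polynomials of degree at most d. Consider the two-parameter family of values sgn(P_i(δ) + (1/β - 1)·P_i(0)) for δ ∈ ℝ and β ∈ (0,1), with sgn(x) = 1 if x ≥ 0 and 0 otherwise. Then the number of distinct vectors in {0,1}^n realized by ((sgn(P_1(δ) + (1/β - 1)P_1(0)), ..., sgn(P_n(δ) + (1/β - 1)P_n(0)))) over all (δ, β) is at most (n² + n)d + n + 1. -/
/-- sgn(x) = 1 if x ≥ 0 and 0 otherwise. -/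
noncomputable def sgn01 (x : ℝ) : Fin 2 := if 0 ≤ x then 1 else 0

namespace S1

lemma sgn01_one {x : ℝ} (h : 0 ≤ x) : sgn01 x = 1 := if_pos h
lemma sgn01_zero {x : ℝ} (h : x < 0) : sgn01 x = 0 := if_neg (not_le.2 h)

lemma sgn01_eq_one_iff {x : ℝ} : sgn01 x = 1 ↔ 0 ≤ x := by
  constructor
  · intro h
    by_contra hx
    rw [sgn01_zero (not_le.1 hx)] at h
    exact absurd h (by decide)
  · exact sgn01_one

lemma fin2_eq_of_iff {a b t : Fin 2} (h : a = t ↔ b = t) : a = b := by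
  revert h; revert a b t; decide

variable {n : ℕ}

section defs
variable (P : Fin n → Polynomial ℝ)

/-- value at 0 -/
noncomputable def bb (i : Fin n) : ℝ := (P i).eval 0

noncomputable def F (i : Fin n) (δ c : ℝ) : ℝ := (P i).eval δ + c * bb P i

noncomputable def val (δ c : ℝ) : Fin n → Fin 2 := fun i => sgn01 (F P i δ c)

/-- target ("switched") value of coordinate i -/
noncomputable def tv (i : Fin n) : Fin 2 := sgn01 (bb P i)

def sw (i : Fin n) (δ c : ℝ) : Prop := val P δ c i = tv P i

/-- the set of sign vectors for fixed δ -/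
def W (δ : ℝ) : Set (Fin n → Fin 2) := {v | ∃ c, 0 < c ∧ v = val P δ c}

/-- all achieved sign vectors -/
def Uset : Set (Fin n → Fin 2) := {v | ∃ δ c, 0 < c ∧ v = val P δ c}

/-- pair resultant-type polynomial -/
noncomputable def Hp (i j : Fin n) : Polynomial ℝ :=
  Polynomial.C (bb P j) * P i - Polynomial.C (bb P i) * P j

/-- threshold -/
noncomputable def θ (i : Fin n) (δ : ℝ) : ℝ := -((P i).eval δ) / bb P i

/-- switched-coordinate set of a vector -/
noncomputable def Sset (u : Fin n → Fin 2) : Finset (Fin n) :=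
  Finset.univ.filter (fun i => u i = tv P i)

end defs

section basic
variable (P : Fin n → Polynomial ℝ)

lemma mem_Uset_iff (v : Fin n → Fin 2) :
    v ∈ Uset P ↔ ∃ δ, v ∈ W P δ := by
  constructor
  · rintro ⟨δ, c, hc, rfl⟩; exact ⟨δ, c, hc, rfl⟩
  · rintro ⟨δ, c, hc, rfl⟩; exact ⟨δ, c, hc, rfl⟩

lemma Hp_eval (i j : Fin n) (δ : ℝ) :
    (Hp P i j).eval δ = bb P j * (P i).eval δ - bb P i * (P j).eval δ := by
  simp [Hp]

/-- key identity: the c-terms cancel -/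
lemma Hp_eval_F (i j : Fin n) (δ c : ℝ) :
    (Hp P i j).eval δ = bb P j * F P i δ c - bb P i * F P j δ c := by
  simp [Hp, F]; ring

lemma Hp_theta (i j : Fin n) (δ : ℝ) (hi : bb P i ≠ 0) (hj : bb P j ≠ 0) :
    (Hp P i j).eval δ = bb P i * bb P j * (θ P j δ - θ P i δ) := by
  rw [Hp_eval]
  simp only [θ]
  field_simp
  ring

lemma mem_Sset_iff (u : Fin n → Fin 2) (i : Fin n) :
    i ∈ Sset P u ↔ u i = tv P i := by simp [Sset]

lemma eq_of_Sset_eq {u u' : Fin n → Fin 2} (h : Sset P u = Sset P u') : u = u' := by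
  funext i
  have h1 : u i = tv P i ↔ u' i = tv P i := by
    rw [← mem_Sset_iff, ← mem_Sset_iff, h]
  exact fin2_eq_of_iff h1

lemma sw_iff_mem_Sset (i : Fin n) (δ c : ℝ) :
    sw P i δ c ↔ i ∈ Sset P (val P δ c) := by
  rw [mem_Sset_iff]; rfl

/-- sw characterization, positive case -/
lemma sw_pos {i : Fin n} (hb : 0 < bb P i) (δ c : ℝ) :
    sw P i δ c ↔ 0 ≤ F P i δ c := by
  unfold sw val tv
  rw [sgn01_one hb.le]
  exact sgn01_eq_one_iff

lemma sw_neg {i : Fin n} (hb : bb P i < 0) (δ c : ℝ) :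
    sw P i δ c ↔ F P i δ c < 0 := by
  unfold sw val tv
  rw [sgn01_zero hb]
  constructor
  · intro h
    by_contra hx
    rw [sgn01_one (not_lt.1 hx)] at h
    exact absurd h (by decide)
  · intro h; exact sgn01_zero h

lemma sw_frozen {i : Fin n} (hb : bb P i = 0) (δ c : ℝ) :
    sw P i δ c ↔ 0 ≤ (P i).eval δ := by
  unfold sw val tv
  rw [hb, sgn01_one le_rfl]
  have : F P i δ c = (P i).eval δ := by simp [F, hb]
  rw [this]
  exact sgn01_eq_one_iff

/-- monotonicity of sw in c -/
lemma sw_mono {i : Fin n} {δ c c' : ℝ} (hcc : c ≤ c') (h : sw P i δ c) :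
    sw P i δ c' := by
  rcases lt_trichotomy (bb P i) 0 with hb | hb | hb
  · rw [sw_neg P hb] at h ⊢
    have : F P i δ c' ≤ F P i δ c := by
      unfold F
      nlinarith
    linarith
  · rwa [sw_frozen P hb] at h ⊢
  · rw [sw_pos P hb] at h ⊢
    have : F P i δ c ≤ F P i δ c' := by
      unfold F
      nlinarith
    linarith

/-- θ characterizations -/
lemma sw_pos_theta {i : Fin n} (hb : 0 < bb P i) (δ c : ℝ) :
    sw P i δ c ↔ θ P i δ ≤ c := by
  rw [sw_pos P hb]
  unfold F θ
  rw [div_le_iff₀ hb]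
  constructor <;> intro h <;> nlinarith

lemma sw_neg_theta {i : Fin n} (hb : bb P i < 0) (δ c : ℝ) :
    sw P i δ c ↔ θ P i δ < c := by
  rw [sw_neg P hb]
  unfold F θ
  rw [div_lt_iff_of_neg hb]
  constructor <;> intro h <;> nlinarith

end basic

section chaincard
variable (P : Fin n → Polynomial ℝ)

/-- unfrozen indices -/
noncomputable def ufz : Finset (Fin n) := Finset.univ.filter (fun i => bb P i ≠ 0)

/-- union of W over a set of δ's -/
def WU (Δ : Set ℝ) : Set (Fin n → Fin 2) := ⋃ δ ∈ Δ, W P δ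

lemma mem_WU_iff {Δ : Set ℝ} (v : Fin n → Fin 2) :
    v ∈ WU P Δ ↔ ∃ δ ∈ Δ, ∃ c, 0 < c ∧ v = val P δ c := by
  simp [WU, W]

private lemma eq_of_cardeq {u u' : Fin n → Fin 2} (K : Finset (Fin n))
    (hss : Sset P u ⊆ Sset P u')
    (hcard : (Sset P u' ∩ K).card ≤ (Sset P u ∩ K).card)
    (hoff : Sset P u \ K = Sset P u' \ K) : u = u' := by
  apply eq_of_Sset_eq P
  have h1 : Sset P u ∩ K = Sset P u' ∩ K :=
    Finset.eq_of_subset_of_card_le (by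
      exact Finset.inter_subset_inter hss (Finset.Subset.refl K)) hcard
  ext i
  by_cases hiK : i ∈ K
  · constructor
    · intro h
      have : i ∈ Sset P u' ∩ K := h1 ▸ Finset.mem_inter.2 ⟨h, hiK⟩
      exact (Finset.mem_inter.1 this).1
    · intro h
      have : i ∈ Sset P u ∩ K := h1.symm ▸ Finset.mem_inter.2 ⟨h, hiK⟩
      exact (Finset.mem_inter.1 this).1
  · constructor
    · intro h
      have : i ∈ Sset P u' \ K := hoff ▸ Finset.mem_sdiff.2 ⟨h, hiK⟩
      exact (Finset.mem_sdiff.1 this).1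
    · intro h
      have : i ∈ Sset P u \ K := hoff.symm ▸ Finset.mem_sdiff.2 ⟨h, hiK⟩
      exact (Finset.mem_sdiff.1 this).1

/-- Generic cardinality bound for a chain family. -/
lemma ncard_le_chain (A : Set (Fin n → Fin 2)) (K : Finset (Fin n))
    (hsub : ∀ u ∈ A, ∀ u' ∈ A, Sset P u ⊆ Sset P u' ∨ Sset P u' ⊆ Sset P u)
    (hoff : ∀ u ∈ A, ∀ u' ∈ A, Sset P u \ K = Sset P u' \ K) :
    A.ncard ≤ K.card + 1 := by
  have hinj : Set.InjOn (fun u => (Sset P u ∩ K).card) A := by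
    intro u hu u' hu' h
    simp only at h
    rcases hsub u hu u' hu' with hss | hss
    · exact eq_of_cardeq P K hss (le_of_eq h.symm) (hoff u hu u' hu')
    · exact (eq_of_cardeq P K hss (le_of_eq h) (hoff u' hu' u hu)).symm
  calc A.ncard = ((fun u => (Sset P u ∩ K).card) '' A).ncard :=
        (Set.ncard_image_of_injOn hinj).symm
    _ ≤ (↑(Finset.range (K.card + 1)) : Set ℕ).ncard := by
        apply Set.ncard_le_ncard
        · rintro x ⟨u, _, rfl⟩
          simp only [Finset.coe_range, Set.mem_Iio]
          have : (Sset P u ∩ K).card ≤ K.card :=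
            Finset.card_le_card (Finset.inter_subset_right)
          omega
        · exact (Finset.range (K.card + 1)).finite_toSet
    _ = K.card + 1 := by rw [Set.ncard_coe_finset, Finset.card_range]

/-- dichotomy hypothesis on a parameter region -/
def Dich (Δ : Set ℝ) : Prop :=
  ∀ i j : Fin n, (∀ δ ∈ Δ, ∀ c : ℝ, 0 < c → sw P j δ c → sw P i δ c) ∨
    (∀ δ ∈ Δ, ∀ c : ℝ, 0 < c → sw P i δ c → sw P j δ c)

/-- frozen-coordinate constancy hypothesis -/
def FzC (Δ : Set ℝ) : Prop :=
  ∀ i : Fin n, bb P i = 0 →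
    (∀ δ ∈ Δ, 0 ≤ (P i).eval δ) ∨ (∀ δ ∈ Δ, (P i).eval δ < 0)

lemma chain_of_dich {Δ : Set ℝ} (hD : Dich P Δ) :
    ∀ u ∈ WU P Δ, ∀ u' ∈ WU P Δ, Sset P u ⊆ Sset P u' ∨ Sset P u' ⊆ Sset P u := by
  intro u hu u' hu'
  rw [mem_WU_iff] at hu hu'
  obtain ⟨δ, hδ, c, hc, rfl⟩ := hu
  obtain ⟨δ', hδ', c', hc', rfl⟩ := hu'
  by_contra hcon
  push_neg at hcon
  obtain ⟨h1, h2⟩ := hcon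
  obtain ⟨i, hiS, hiS'⟩ := Finset.not_subset.1 h1
  obtain ⟨j, hjS', hjS⟩ := Finset.not_subset.1 h2
  rw [← sw_iff_mem_Sset] at hiS hjS'
  have hiS' : ¬ sw P i δ' c' := by rwa [sw_iff_mem_Sset]
  have hjS : ¬ sw P j δ c := by rwa [sw_iff_mem_Sset]
  rcases hD i j with h | h
  · exact hiS' (h δ' hδ' c' hc' hjS')
  · exact hjS (h δ hδ c hc hiS)

lemma off_of_fzc {Δ : Set ℝ} (hF : FzC P Δ) :
    ∀ u ∈ WU P Δ, ∀ u' ∈ WU P Δ, Sset P u \ ufz P = Sset P u' \ ufz P := by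
  intro u hu u' hu'
  rw [mem_WU_iff] at hu hu'
  obtain ⟨δ, hδ, c, hc, rfl⟩ := hu
  obtain ⟨δ', hδ', c', hc', rfl⟩ := hu'
  ext i
  simp only [Finset.mem_sdiff, ufz, Finset.mem_filter, Finset.mem_univ, true_and, not_not]
  constructor
  · rintro ⟨hS, hb⟩
    refine ⟨?_, hb⟩
    rw [← sw_iff_mem_Sset] at hS
    rw [← sw_iff_mem_Sset, sw_frozen P hb]
    rw [sw_frozen P hb] at hS
    rcases hF i hb with h | h
    · exact h δ' hδ'
    · exact absurd hS (not_le.2 (h δ hδ))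
  · rintro ⟨hS, hb⟩
    refine ⟨?_, hb⟩
    rw [← sw_iff_mem_Sset] at hS
    rw [← sw_iff_mem_Sset, sw_frozen P hb]
    rw [sw_frozen P hb] at hS
    rcases hF i hb with h | h
    · exact h δ hδ
    · exact absurd hS (not_le.2 (h δ' hδ'))

/-- Main chain-cardinality bound over a region. -/
lemma WU_ncard_le {Δ : Set ℝ} (hD : Dich P Δ) (hF : FzC P Δ) :
    (WU P Δ).ncard ≤ (ufz P).card + 1 :=
  ncard_le_chain P _ _ (chain_of_dich P hD) (off_of_fzc P hF)

end chaincard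

section ivt

lemma poly_sign_const {Q : Polynomial ℝ} {Δ : Set ℝ} (hΔ : Δ.OrdConnected)
    (h : ∀ x ∈ Δ, Q.eval x ≠ 0) :
    (∀ x ∈ Δ, 0 < Q.eval x) ∨ (∀ x ∈ Δ, Q.eval x < 0) := by
  by_contra hcon
  push_neg at hcon
  obtain ⟨⟨x, hx, hx0⟩, ⟨y, hy, hy0⟩⟩ := hcon
  have hx0 : Q.eval x < 0 := lt_of_le_of_ne hx0 (h x hx)
  have hy0 : 0 < Q.eval y := lt_of_le_of_ne hy0 (Ne.symm (h y hy))
  have hsub : Set.uIcc x y ⊆ Δ := Set.OrdConnected.uIcc_subset hΔ hx hy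
  have hc : ContinuousOn (fun t => Q.eval t) (Set.uIcc x y) :=
    Q.continuous_aeval.continuousOn.congr (by intro t _; simp [Polynomial.aeval_def]) |>.congr (fun t _ => rfl)
  have := intermediate_value_uIcc (a := x) (b := y) (f := fun t => Q.eval t)
    (Q.continuous.continuousOn)
  have h0 : (0:ℝ) ∈ Set.uIcc (Q.eval x) (Q.eval y) := by
    rw [Set.mem_uIcc]
    left; exact ⟨hx0.le, hy0.le⟩
  obtain ⟨z, hz, hz0⟩ := this h0
  exact h z (hsub hz) hz0

lemma eval_nonpos_left {Q : Polynomial ℝ} {a b : ℝ} (hab : a < b)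
    (h : ∀ x ∈ Set.Ioo a b, Q.eval x ≤ 0) : Q.eval a ≤ 0 := by
  have ht : Filter.Tendsto (fun x => Q.eval x) (nhdsWithin a (Set.Ioi a)) (nhds (Q.eval a)) :=
    (Q.continuous.tendsto a).mono_left nhdsWithin_le_nhds
  refine le_of_tendsto ht ?_
  filter_upwards [Ioo_mem_nhdsGT_of_mem (Set.mem_Ico.2 ⟨le_rfl, hab⟩)] with x hx
  exact h x hx

lemma eval_nonpos_right {Q : Polynomial ℝ} {a b : ℝ} (hab : a < b)
    (h : ∀ x ∈ Set.Ioo a b, Q.eval x ≤ 0) : Q.eval b ≤ 0 := by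
  have ht : Filter.Tendsto (fun x => Q.eval x) (nhdsWithin b (Set.Iio b)) (nhds (Q.eval b)) :=
    (Q.continuous.tendsto b).mono_left nhdsWithin_le_nhds
  refine le_of_tendsto ht ?_
  filter_upwards [Ioo_mem_nhdsLT_of_mem (Set.mem_Ioc.2 ⟨hab, le_rfl⟩)] with x hx
  exact h x hx

lemma eval_nonneg_left {Q : Polynomial ℝ} {a b : ℝ} (hab : a < b)
    (h : ∀ x ∈ Set.Ioo a b, 0 ≤ Q.eval x) : 0 ≤ Q.eval a := by
  have := eval_nonpos_left (Q := -Q) hab (by intro x hx; simp [h x hx])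
  simpa using this

lemma eval_nonneg_right {Q : Polynomial ℝ} {a b : ℝ} (hab : a < b)
    (h : ∀ x ∈ Set.Ioo a b, 0 ≤ Q.eval x) : 0 ≤ Q.eval b := by
  have := eval_nonpos_right (Q := -Q) hab (by intro x hx; simp [h x hx])
  simpa using this

end ivt

section cores
variable (P : Fin n → Polynomial ℝ)

lemma corePP {i j : Fin n} {Δ : Set ℝ} (hbi : 0 < bb P i) (hbj : 0 < bb P j)
    (hH : ∀ δ ∈ Δ, 0 ≤ (Hp P i j).eval δ) :
    ∀ δ ∈ Δ, ∀ c : ℝ, 0 < c → sw P j δ c → sw P i δ c := by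
  intro δ hδ c _ hj
  rw [sw_pos P hbj] at hj
  rw [sw_pos P hbi]
  have hid := Hp_eval_F P i j δ c
  have := hH δ hδ
  nlinarith

lemma coreNN {i j : Fin n} {Δ : Set ℝ} (hbi : bb P i < 0) (hbj : bb P j < 0)
    (hH : ∀ δ ∈ Δ, 0 ≤ (Hp P i j).eval δ) :
    ∀ δ ∈ Δ, ∀ c : ℝ, 0 < c → sw P j δ c → sw P i δ c := by
  intro δ hδ c _ hj
  rw [sw_neg P hbj] at hj
  rw [sw_neg P hbi]
  have hid := Hp_eval_F P i j δ c
  have := hH δ hδ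
  nlinarith

lemma coreNP {i j : Fin n} {Δ : Set ℝ} (hbi : bb P i < 0) (hbj : 0 < bb P j)
    (hH : ∀ δ ∈ Δ, 0 ≤ (Hp P i j).eval δ) :
    ∀ δ ∈ Δ, ∀ c : ℝ, 0 < c → sw P i δ c → sw P j δ c := by
  intro δ hδ c _ hi
  rw [sw_neg P hbi] at hi
  rw [sw_pos P hbj]
  have hid := Hp_eval_F P i j δ c
  have := hH δ hδ
  nlinarith

lemma corePNpos {i j : Fin n} {Δ : Set ℝ} (hbi : 0 < bb P i) (hbj : bb P j < 0)
    (hH : ∀ δ ∈ Δ, 0 < (Hp P i j).eval δ) :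
    ∀ δ ∈ Δ, ∀ c : ℝ, 0 < c → sw P i δ c → sw P j δ c := by
  intro δ hδ c _ hi
  rw [sw_pos P hbi] at hi
  rw [sw_neg P hbj]
  have hid := Hp_eval_F P i j δ c
  have := hH δ hδ
  nlinarith

lemma corePNzero {i j : Fin n} {Δ : Set ℝ} (hbi : 0 < bb P i) (hbj : bb P j < 0)
    (hH : ∀ δ ∈ Δ, (Hp P i j).eval δ = 0) :
    ∀ δ ∈ Δ, ∀ c : ℝ, 0 < c → sw P j δ c → sw P i δ c := by
  intro δ hδ c _ hj
  rw [sw_neg P hbj] at hj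
  rw [sw_pos P hbi]
  have hid := Hp_eval_F P i j δ c
  have := hH δ hδ
  nlinarith

lemma Hp_anti (i j : Fin n) : Hp P j i = - Hp P i j := by
  unfold Hp; ring

/-- Dichotomy from sign data on an order-connected region. -/
lemma dich_of_signs {Δ : Set ℝ} (hΔ : Δ.OrdConnected) (hF : FzC P Δ)
    (hcrit : ∀ i j : Fin n, bb P i ≠ 0 → bb P j ≠ 0 → Hp P i j ≠ 0 →
      ∀ δ ∈ Δ, (Hp P i j).eval δ ≠ 0) :
    Dich P Δ := by
  intro i j
  by_cases hbi0 : bb P i = 0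
  · rcases hF i hbi0 with h | h
    · left; intro δ hδ c _ _
      rw [sw_frozen P hbi0]; exact h δ hδ
    · right; intro δ hδ c _ hi
      rw [sw_frozen P hbi0] at hi
      exact absurd hi (not_le.2 (h δ hδ))
  by_cases hbj0 : bb P j = 0
  · rcases hF j hbj0 with h | h
    · right; intro δ hδ c _ _
      rw [sw_frozen P hbj0]; exact h δ hδ
    · left; intro δ hδ c _ hj
      rw [sw_frozen P hbj0] at hj
      exact absurd hj (not_le.2 (h δ hδ))
  -- both unfrozen
  have htri : (∀ δ ∈ Δ, (Hp P i j).eval δ = 0) ∨ (∀ δ ∈ Δ, 0 < (Hp P i j).eval δ) ∨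
      (∀ δ ∈ Δ, (Hp P i j).eval δ < 0) := by
    by_cases hz : Hp P i j = 0
    · left; intro δ _; rw [hz]; simp
    · rcases poly_sign_const hΔ (hcrit i j hbi0 hbj0 hz) with h | h
      · right; left; exact h
      · right; right; exact h
  have hji : ∀ δ : ℝ, (Hp P j i).eval δ = - (Hp P i j).eval δ := by
    intro δ; rw [Hp_anti]; simp
  rcases lt_or_gt_of_ne hbi0 with hbi | hbi <;> rcases lt_or_gt_of_ne hbj0 with hbj | hbj
  · -- NN
    rcases htri with h | h | h
    · left; exact coreNN P hbi hbj (fun δ hδ => le_of_eq (h δ hδ).symm)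
    · left; exact coreNN P hbi hbj (fun δ hδ => (h δ hδ).le)
    · right; refine coreNN P hbj hbi (fun δ hδ => ?_)
      rw [hji]; linarith [h δ hδ]
  · -- i neg, j pos : NP
    rcases htri with h | h | h
    · right; exact coreNP P hbi hbj (fun δ hδ => le_of_eq (h δ hδ).symm)
    · right; exact coreNP P hbi hbj (fun δ hδ => (h δ hδ).le)
    · -- H < 0 : swapped pair (j,i) is (pos,neg) with Hp j i > 0
      left; refine corePNpos P hbj hbi (fun δ hδ => ?_)
      rw [hji]; linarith [h δ hδ]
  · -- i pos, j neg : PN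
    rcases htri with h | h | h
    · left; exact corePNzero P hbi hbj h
    · right; exact corePNpos P hbi hbj h
    · -- H < 0: swapped (j,i) : (neg,pos) with Hp j i > 0 ≥ 0 : coreNP gives sw_j → sw_i
      left; refine coreNP P hbj hbi (fun δ hδ => ?_)
      rw [hji]; linarith [h δ hδ]
  · -- PP
    rcases htri with h | h | h
    · left; exact corePP P hbi hbj (fun δ hδ => le_of_eq (h δ hδ).symm)
    · left; exact corePP P hbi hbj (fun δ hδ => (h δ hδ).le)
    · right; refine corePP P hbj hbi (fun δ hδ => ?_)
      rw [hji]; linarith [h δ hδ]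

end cores

section relations
variable (P : Fin n → Polynomial ℝ)

def Rrel (i j : Fin n) (δ : ℝ) : Prop := ∃ c, 0 < c ∧ sw P i δ c ∧ ¬ sw P j δ c
def Nrel (j : Fin n) (δ : ℝ) : Prop := ∃ c, 0 < c ∧ ¬ sw P j δ c

lemma theta_pos_iff_P {j : Fin n} (hb : 0 < bb P j) (δ : ℝ) :
    0 < θ P j δ ↔ (P j).eval δ < 0 := by
  unfold θ
  rw [div_pos_iff]
  constructor
  · rintro (⟨h, _⟩ | ⟨_, h⟩) <;> linarith
  · intro h; left; exact ⟨by linarith, hb⟩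

lemma theta_pos_iff_N {j : Fin n} (hb : bb P j < 0) (δ : ℝ) :
    0 < θ P j δ ↔ 0 < (P j).eval δ := by
  unfold θ
  rw [div_pos_iff]
  constructor
  · rintro (⟨_, h⟩ | ⟨h, _⟩) <;> linarith
  · intro h; right; exact ⟨by linarith, hb⟩

lemma bne_of_pos {i : Fin n} {x : ℝ} (h : 0 < x * bb P i) : bb P i ≠ 0 := by
  intro h0; rw [h0] at h; simp at h

lemma theta_lt_iff_pos_prod {i j : Fin n} (h : 0 < bb P i * bb P j) (δ : ℝ) :
    θ P i δ < θ P j δ ↔ 0 < (Hp P i j).eval δ := by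
  have hbi : bb P i ≠ 0 := fun h0 => by rw [h0] at h; simp at h
  have hbj : bb P j ≠ 0 := fun h0 => by rw [h0] at h; simp at h
  rw [Hp_theta P i j δ hbi hbj]
  constructor <;> intro hh <;> nlinarith

lemma theta_le_iff_pos_prod {i j : Fin n} (h : 0 < bb P i * bb P j) (δ : ℝ) :
    θ P i δ ≤ θ P j δ ↔ 0 ≤ (Hp P i j).eval δ := by
  have hbi : bb P i ≠ 0 := fun h0 => by rw [h0] at h; simp at h
  have hbj : bb P j ≠ 0 := fun h0 => by rw [h0] at h; simp at h
  rw [Hp_theta P i j δ hbi hbj]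
  constructor <;> intro hh <;> nlinarith

lemma theta_lt_iff_neg_prod {i j : Fin n} (h : bb P i * bb P j < 0) (δ : ℝ) :
    θ P i δ < θ P j δ ↔ (Hp P i j).eval δ < 0 := by
  have hbi : bb P i ≠ 0 := fun h0 => by rw [h0] at h; simp at h
  have hbj : bb P j ≠ 0 := fun h0 => by rw [h0] at h; simp at h
  rw [Hp_theta P i j δ hbi hbj]
  constructor <;> intro hh <;> nlinarith

lemma theta_le_iff_neg_prod {i j : Fin n} (h : bb P i * bb P j < 0) (δ : ℝ) :
    θ P i δ ≤ θ P j δ ↔ (Hp P i j).eval δ ≤ 0 := by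
  have hbi : bb P i ≠ 0 := fun h0 => by rw [h0] at h; simp at h
  have hbj : bb P j ≠ 0 := fun h0 => by rw [h0] at h; simp at h
  rw [Hp_theta P i j δ hbi hbj]
  constructor <;> intro hh <;> nlinarith

lemma Aex {i : Fin n} (hb : bb P i ≠ 0) (δ : ℝ) : ∃ c, 0 < c ∧ sw P i δ c := by
  rcases lt_or_gt_of_ne hb with h | h
  · refine ⟨max (θ P i δ + 1) 1, ?_, ?_⟩
    · exact lt_of_lt_of_le one_pos (le_max_right _ _)
    · rw [sw_neg_theta P h]
      calc θ P i δ < θ P i δ + 1 := by linarith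
        _ ≤ _ := le_max_left _ _
  · refine ⟨max (θ P i δ + 1) 1, ?_, ?_⟩
    · exact lt_of_lt_of_le one_pos (le_max_right _ _)
    · rw [sw_pos_theta P h]
      calc θ P i δ ≤ θ P i δ + 1 := by linarith
        _ ≤ _ := le_max_left _ _

lemma Nrel_pos {j : Fin n} (hb : 0 < bb P j) (δ : ℝ) :
    Nrel P j δ ↔ (P j).eval δ < 0 := by
  unfold Nrel
  rw [← theta_pos_iff_P P hb]
  constructor
  · rintro ⟨c, hc, hsw⟩
    rw [sw_pos_theta P hb] at hsw
    push_neg at hsw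
    linarith
  · intro h
    refine ⟨θ P j δ / 2, by linarith, ?_⟩
    rw [sw_pos_theta P hb]
    push_neg
    linarith

lemma Nrel_neg {j : Fin n} (hb : bb P j < 0) (δ : ℝ) :
    Nrel P j δ ↔ 0 < (P j).eval δ := by
  unfold Nrel
  rw [← theta_pos_iff_N P hb]
  constructor
  · rintro ⟨c, hc, hsw⟩
    rw [sw_neg_theta P hb] at hsw
    push_neg at hsw
    linarith
  · intro h
    refine ⟨θ P j δ, h, ?_⟩
    rw [sw_neg_theta P hb]
    push_neg
    rfl

lemma Rrel_pp {i j : Fin n} (hbi : 0 < bb P i) (hbj : 0 < bb P j) (δ : ℝ) :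
    Rrel P i j δ ↔ (P j).eval δ < 0 ∧ 0 < (Hp P i j).eval δ := by
  have hprod : 0 < bb P i * bb P j := mul_pos hbi hbj
  rw [← theta_pos_iff_P P hbj, ← theta_lt_iff_pos_prod P hprod]
  constructor
  · rintro ⟨c, hc, hi, hj⟩
    rw [sw_pos_theta P hbi] at hi
    rw [sw_pos_theta P hbj] at hj
    push_neg at hj
    exact ⟨by linarith, by linarith⟩
  · rintro ⟨h1, h2⟩
    refine ⟨max (θ P i δ) (θ P j δ / 2), ?_, ?_, ?_⟩
    · exact lt_of_lt_of_le (by linarith) (le_max_right _ _)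
    · rw [sw_pos_theta P hbi]; exact le_max_left _ _
    · rw [sw_pos_theta P hbj]; push_neg
      exact max_lt h2 (by linarith)

lemma Rrel_pn {i j : Fin n} (hbi : 0 < bb P i) (hbj : bb P j < 0) (δ : ℝ) :
    Rrel P i j δ ↔ 0 < (P j).eval δ ∧ (Hp P i j).eval δ ≤ 0 := by
  have hprod : bb P i * bb P j < 0 := mul_neg_of_pos_of_neg hbi hbj
  rw [← theta_pos_iff_N P hbj, ← theta_le_iff_neg_prod P hprod]
  constructor
  · rintro ⟨c, hc, hi, hj⟩
    rw [sw_pos_theta P hbi] at hi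
    rw [sw_neg_theta P hbj] at hj
    push_neg at hj
    exact ⟨by linarith, by linarith⟩
  · rintro ⟨h1, h2⟩
    refine ⟨θ P j δ, h1, ?_, ?_⟩
    · rw [sw_pos_theta P hbi]; exact h2
    · rw [sw_neg_theta P hbj]; push_neg; rfl

lemma Rrel_np {i j : Fin n} (hbi : bb P i < 0) (hbj : 0 < bb P j) (δ : ℝ) :
    Rrel P i j δ ↔ (P j).eval δ < 0 ∧ (Hp P i j).eval δ < 0 := by
  have hprod : bb P i * bb P j < 0 := mul_neg_of_neg_of_pos hbi hbj
  rw [← theta_pos_iff_P P hbj, ← theta_lt_iff_neg_prod P hprod]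
  constructor
  · rintro ⟨c, hc, hi, hj⟩
    rw [sw_neg_theta P hbi] at hi
    rw [sw_pos_theta P hbj] at hj
    push_neg at hj
    exact ⟨by linarith, by linarith⟩
  · rintro ⟨h1, h2⟩
    refine ⟨(max (θ P i δ) 0 + θ P j δ) / 2, ?_, ?_, ?_⟩
    · have h3 : (0:ℝ) ≤ max (θ P i δ) 0 := le_max_right _ _
      linarith
    · rw [sw_neg_theta P hbi]
      have h3 : θ P i δ ≤ max (θ P i δ) 0 := le_max_left _ _
      have h4 : max (θ P i δ) 0 < θ P j δ := max_lt h2 h1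
      linarith
    · rw [sw_pos_theta P hbj]; push_neg
      have h4 : max (θ P i δ) 0 < θ P j δ := max_lt h2 h1
      linarith

lemma Rrel_nn {i j : Fin n} (hbi : bb P i < 0) (hbj : bb P j < 0) (δ : ℝ) :
    Rrel P i j δ ↔ 0 < (P j).eval δ ∧ 0 < (Hp P i j).eval δ := by
  have hprod : 0 < bb P i * bb P j := mul_pos_of_neg_of_neg hbi hbj
  rw [← theta_pos_iff_N P hbj, ← theta_lt_iff_pos_prod P hprod]
  constructor
  · rintro ⟨c, hc, hi, hj⟩
    rw [sw_neg_theta P hbi] at hi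
    rw [sw_neg_theta P hbj] at hj
    push_neg at hj
    exact ⟨by linarith, by linarith⟩
  · rintro ⟨h1, h2⟩
    refine ⟨θ P j δ, h1, ?_, ?_⟩
    · rw [sw_neg_theta P hbi]; exact h2
    · rw [sw_neg_theta P hbj]; push_neg; rfl

end relations

section transfer
variable (P : Fin n → Polynomial ℝ)

lemma sign_trio {Q : Polynomial ℝ} {Δ : Set ℝ} (hΔ : Δ.OrdConnected)
    (h : Q = 0 ∨ ∀ x ∈ Δ, Q.eval x ≠ 0) :
    (∀ x ∈ Δ, Q.eval x = 0) ∨ (∀ x ∈ Δ, 0 < Q.eval x) ∨ (∀ x ∈ Δ, Q.eval x < 0) := by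
  rcases h with h | h
  · left; intro x _; rw [h]; simp
  · rcases poly_sign_const hΔ h with h' | h'
    · right; left; exact h'
    · right; right; exact h'

lemma trio_transfer {Q : Polynomial ℝ} {Δ : Set ℝ}
    (trio : (∀ x ∈ Δ, Q.eval x = 0) ∨ (∀ x ∈ Δ, 0 < Q.eval x) ∨ (∀ x ∈ Δ, Q.eval x < 0))
    {δ δ' : ℝ} (hδ : δ ∈ Δ) (hδ' : δ' ∈ Δ) :
    (Q.eval δ < 0 → Q.eval δ' < 0) ∧ (0 < Q.eval δ → 0 < Q.eval δ') ∧
    (Q.eval δ ≤ 0 → Q.eval δ' ≤ 0) ∧ (0 ≤ Q.eval δ → 0 ≤ Q.eval δ') := by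
  rcases trio with h | h | h <;>
    · have h1 := h δ hδ
      have h2 := h δ' hδ'
      exact ⟨fun hh => by linarith, fun hh => by linarith,
        fun hh => by linarith, fun hh => by linarith⟩

lemma Rrel_transfer {i j : Fin n} (hbi : bb P i ≠ 0) (hbj : bb P j ≠ 0)
    {Δ : Set ℝ} (hΔ : Δ.OrdConnected)
    (hPj : ∀ x ∈ Δ, (P j).eval x ≠ 0)
    (hHp : Hp P i j = 0 ∨ ∀ x ∈ Δ, (Hp P i j).eval x ≠ 0)
    {δ δ' : ℝ} (hδ : δ ∈ Δ) (hδ' : δ' ∈ Δ) (h : Rrel P i j δ) : Rrel P i j δ' := by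
  have trioP := sign_trio (Q := P j) hΔ (Or.inr hPj)
  have trioH := sign_trio (Q := Hp P i j) hΔ hHp
  obtain ⟨tp1, tp2, tp3, tp4⟩ := trio_transfer trioP hδ hδ'
  obtain ⟨th1, th2, th3, th4⟩ := trio_transfer trioH hδ hδ'
  rcases lt_or_gt_of_ne hbi with hi | hi <;> rcases lt_or_gt_of_ne hbj with hj | hj
  · rw [Rrel_nn P hi hj] at h ⊢; exact ⟨tp2 h.1, th2 h.2⟩
  · rw [Rrel_np P hi hj] at h ⊢; exact ⟨tp1 h.1, th1 h.2⟩
  · rw [Rrel_pn P hi hj] at h ⊢; exact ⟨tp2 h.1, th3 h.2⟩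
  · rw [Rrel_pp P hi hj] at h ⊢; exact ⟨tp1 h.1, th2 h.2⟩

lemma Nrel_transfer {j : Fin n} (hbj : bb P j ≠ 0)
    {Δ : Set ℝ} (hΔ : Δ.OrdConnected)
    (hPj : ∀ x ∈ Δ, (P j).eval x ≠ 0)
    {δ δ' : ℝ} (hδ : δ ∈ Δ) (hδ' : δ' ∈ Δ) (h : Nrel P j δ) : Nrel P j δ' := by
  have trioP := sign_trio (Q := P j) hΔ (Or.inr hPj)
  obtain ⟨tp1, tp2, _, _⟩ := trio_transfer trioP hδ hδ'
  rcases lt_or_gt_of_ne hbj with hj | hj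
  · rw [Nrel_neg P hj] at h ⊢; exact tp2 h
  · rw [Nrel_pos P hj] at h ⊢; exact tp1 h

/-- monotonicity at the boundary: Rrel on a right-neighbourhood forces θ_i ≤ θ_j at the endpoint -/
lemma theta_mono_right {i j : Fin n} (hbi : bb P i ≠ 0) (hbj : bb P j ≠ 0)
    {ρ t : ℝ} (hρt : ρ < t)
    (h : ∀ δ ∈ Set.Ioo ρ t, Rrel P i j δ) : θ P i ρ ≤ θ P j ρ := by
  rcases lt_or_gt_of_ne hbi with hi | hi <;> rcases lt_or_gt_of_ne hbj with hj | hj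
  · rw [theta_le_iff_pos_prod P (mul_pos_of_neg_of_neg hi hj)]
    refine eval_nonneg_left hρt (fun x hx => ?_)
    exact ((Rrel_nn P hi hj x).1 (h x hx)).2.le
  · rw [theta_le_iff_neg_prod P (mul_neg_of_neg_of_pos hi hj)]
    refine eval_nonpos_left hρt (fun x hx => ?_)
    exact ((Rrel_np P hi hj x).1 (h x hx)).2.le
  · rw [theta_le_iff_neg_prod P (mul_neg_of_pos_of_neg hi hj)]
    refine eval_nonpos_left hρt (fun x hx => ?_)
    exact ((Rrel_pn P hi hj x).1 (h x hx)).2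
  · rw [theta_le_iff_pos_prod P (mul_pos hi hj)]
    refine eval_nonneg_left hρt (fun x hx => ?_)
    exact ((Rrel_pp P hi hj x).1 (h x hx)).2.le

/-- squeeze: a coordinate wedged against a root is itself at a root -/
lemma root_squeeze {l j : Fin n} (hbl : bb P l ≠ 0) (hbj : bb P j ≠ 0)
    {ρ t : ℝ} (hρt : ρ < t)
    (hN : ∀ δ ∈ Set.Ioo ρ t, Nrel P l δ) (hR : ∀ δ ∈ Set.Ioo ρ t, Rrel P l j δ)
    (hPj : (P j).eval ρ = 0) : (P l).eval ρ = 0 := by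
  have hHρ : (Hp P l j).eval ρ = bb P j * (P l).eval ρ := by
    rw [Hp_eval, hPj]; ring
  rcases lt_or_gt_of_ne hbl with hl | hl <;> rcases lt_or_gt_of_ne hbj with hj | hj
  · -- l neg, j neg : Nrel: 0 < P_l ; Rrel: 0 < Hp
    have h1 : 0 ≤ (P l).eval ρ :=
      eval_nonneg_left hρt (fun x hx => ((Nrel_neg P hl x).1 (hN x hx)).le)
    have h2 : 0 ≤ (Hp P l j).eval ρ :=
      eval_nonneg_left hρt (fun x hx => ((Rrel_nn P hl hj x).1 (hR x hx)).2.le)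
    rw [hHρ] at h2
    nlinarith
  · -- l neg, j pos : Nrel: 0 < P_l ; Rrel: Hp < 0
    have h1 : 0 ≤ (P l).eval ρ :=
      eval_nonneg_left hρt (fun x hx => ((Nrel_neg P hl x).1 (hN x hx)).le)
    have h2 : (Hp P l j).eval ρ ≤ 0 :=
      eval_nonpos_left hρt (fun x hx => ((Rrel_np P hl hj x).1 (hR x hx)).2.le)
    rw [hHρ] at h2
    nlinarith
  · -- l pos, j neg : Nrel: P_l < 0 ; Rrel: Hp ≤ 0
    have h1 : (P l).eval ρ ≤ 0 :=
      eval_nonpos_left hρt (fun x hx => ((Nrel_pos P hl x).1 (hN x hx)).le)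
    have h2 : (Hp P l j).eval ρ ≤ 0 :=
      eval_nonpos_left hρt (fun x hx => ((Rrel_pn P hl hj x).1 (hR x hx)).2)
    rw [hHρ] at h2
    nlinarith
  · -- l pos, j pos : Nrel: P_l < 0 ; Rrel: 0 < Hp
    have h1 : (P l).eval ρ ≤ 0 :=
      eval_nonpos_left hρt (fun x hx => ((Nrel_pos P hl x).1 (hN x hx)).le)
    have h2 : 0 ≤ (Hp P l j).eval ρ :=
      eval_nonneg_left hρt (fun x hx => ((Rrel_pp P hl hj x).1 (hR x hx)).2.le)
    rw [hHρ] at h2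
    nlinarith

lemma theta_eq_iff {i j : Fin n} (hbi : bb P i ≠ 0) (hbj : bb P j ≠ 0) (δ : ℝ) :
    θ P i δ = θ P j δ ↔ (Hp P i j).eval δ = 0 := by
  rw [Hp_theta P i j δ hbi hbj]
  constructor
  · intro h; rw [h]; ring
  · intro h
    have hne : bb P i * bb P j ≠ 0 := mul_ne_zero hbi hbj
    have := mul_eq_zero.1 h
    rcases this with h' | h'
    · exact absurd h' hne
    · linarith [sub_eq_zero.1 h']

lemma Hp_trans {i j l : Fin n} (hbl : bb P l ≠ 0)
    (h1 : Hp P i l = 0) (h2 : Hp P l j = 0) : Hp P i j = 0 := by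
  have key : Polynomial.C (bb P l) * Hp P i j = 0 := by
    unfold Hp at h1 h2 ⊢
    linear_combination Polynomial.C (bb P j) * h1 + Polynomial.C (bb P i) * h2
  rcases mul_eq_zero.1 key with h | h
  · exact absurd (Polynomial.C_eq_zero.1 h) hbl
  · exact h

end transfer

section realize
variable (P : Fin n → Polynomial ℝ)

lemma ray_comparable (δ : ℝ) (a b : Fin n) :
    (∀ c : ℝ, sw P a δ c → sw P b δ c) ∨ (∀ c : ℝ, sw P b δ c → sw P a δ c) := by
  by_contra h
  push_neg at h
  obtain ⟨⟨x, hax, hbx⟩, ⟨y, hby, hay⟩⟩ := h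
  rcases le_total x y with hxy | hxy
  · exact hay (sw_mono P hxy hax)
  · exact hbx (sw_mono P hxy hby)

lemma ray_min (δ : ℝ) (T : Finset (Fin n)) (hT : T.Nonempty) :
    ∃ i' ∈ T, ∀ i ∈ T, ∀ c : ℝ, sw P i' δ c → sw P i δ c := by
  induction hT using Finset.Nonempty.cons_induction with
  | singleton a => exact ⟨a, Finset.mem_singleton_self a, by
      intro i hi c h
      rw [Finset.mem_singleton] at hi
      rwa [hi]⟩
  | cons a T haT hTne ih =>
      obtain ⟨i', hi'T, hmin⟩ := ih
      rcases ray_comparable P δ a i' with h | h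
      · refine ⟨a, Finset.mem_cons_self a T, ?_⟩
        intro i hi c hc
        rcases Finset.mem_cons.1 hi with rfl | hi
        · exact hc
        · exact hmin i hi c (h c hc)
      · refine ⟨i', Finset.mem_cons.2 (Or.inr hi'T), ?_⟩
        intro i hi c hc
        rcases Finset.mem_cons.1 hi with rfl | hi
        · exact h c hc
        · exact hmin i hi c hc

lemma ray_max (δ : ℝ) (T : Finset (Fin n)) (hT : T.Nonempty) :
    ∃ j' ∈ T, ∀ j ∈ T, ∀ c : ℝ, sw P j δ c → sw P j' δ c := by
  induction hT using Finset.Nonempty.cons_induction with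
  | singleton a => exact ⟨a, Finset.mem_singleton_self a, by
      intro i hi c h
      rw [Finset.mem_singleton] at hi
      rw [hi] at h; exact h⟩
  | cons a T haT hTne ih =>
      obtain ⟨j', hj'T, hmax⟩ := ih
      rcases ray_comparable P δ a j' with h | h
      · refine ⟨j', Finset.mem_cons.2 (Or.inr hj'T), ?_⟩
        intro j hj c hc
        rcases Finset.mem_cons.1 hj with rfl | hj
        · exact h c hc
        · exact hmax j hj c hc
      · refine ⟨a, Finset.mem_cons_self a T, ?_⟩
        intro j hj c hc
        rcases Finset.mem_cons.1 hj with rfl | hj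
        · exact hc
        · exact h c (hmax j hj c hc)

/-- The realization lemma: local pairwise data suffices to realize a switch set. -/
lemma realize (δ : ℝ) (S : Finset (Fin n))
    (hfz : ∀ i : Fin n, bb P i = 0 → (i ∈ S ↔ 0 ≤ (P i).eval δ))
    (hR : ∀ i ∈ S, ∀ j : Fin n, j ∉ S → bb P i ≠ 0 → bb P j ≠ 0 → Rrel P i j δ)
    (hN : ∀ j : Fin n, j ∉ S → bb P j ≠ 0 → Nrel P j δ) :
    ∃ c, 0 < c ∧ Sset P (val P δ c) = S := by
  classical
  set A : Finset (Fin n) := S.filter (fun i => bb P i ≠ 0) with hA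
  set B : Finset (Fin n) := Finset.univ.filter (fun j => j ∉ S ∧ bb P j ≠ 0) with hB
  have memA : ∀ i, i ∈ A ↔ i ∈ S ∧ bb P i ≠ 0 := by
    intro i; simp [hA]
  have memB : ∀ j, j ∈ B ↔ j ∉ S ∧ bb P j ≠ 0 := by
    intro j; simp [hB]
  have key : ∃ c, 0 < c ∧ (∀ i ∈ A, sw P i δ c) ∧ (∀ j ∈ B, ¬ sw P j δ c) := by
    rcases A.eq_empty_or_nonempty with hAe | hAne <;>
      rcases B.eq_empty_or_nonempty with hBe | hBne
    · exact ⟨1, one_pos, by simp [hAe], by simp [hBe]⟩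
    · obtain ⟨j', hj'B, hmax⟩ := ray_max P δ B hBne
      obtain ⟨hj'S, hj'b⟩ := (memB j').1 hj'B
      obtain ⟨c, hc, hnsw⟩ := (hN j' hj'S hj'b)
      exact ⟨c, hc, by simp [hAe], fun j hj hsw => hnsw (hmax j hj c hsw)⟩
    · obtain ⟨i', hi'A, hmin⟩ := ray_min P δ A hAne
      obtain ⟨hi'S, hi'b⟩ := (memA i').1 hi'A
      obtain ⟨c, hc, hsw⟩ := Aex P hi'b δ
      exact ⟨c, hc, fun i hi => hmin i hi c hsw, by simp [hBe]⟩
    · obtain ⟨i', hi'A, hmin⟩ := ray_min P δ A hAne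
      obtain ⟨j', hj'B, hmax⟩ := ray_max P δ B hBne
      obtain ⟨hi'S, hi'b⟩ := (memA i').1 hi'A
      obtain ⟨hj'S, hj'b⟩ := (memB j').1 hj'B
      obtain ⟨c, hc, hswi, hnswj⟩ := hR i' hi'S j' hj'S hi'b hj'b
      exact ⟨c, hc, fun i hi => hmin i hi c hswi,
        fun j hj hsw => hnswj (hmax j hj c hsw)⟩
  obtain ⟨c, hc, hAc, hBc⟩ := key
  refine ⟨c, hc, ?_⟩
  ext i
  rw [← sw_iff_mem_Sset]
  by_cases hbi : bb P i = 0
  · rw [sw_frozen P hbi, ← hfz i hbi]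
  · constructor
    · intro hsw
      by_contra hiS
      exact hBc i ((memB i).2 ⟨hiS, hbi⟩) hsw
    · intro hiS
      exact hAc i ((memA i).2 ⟨hiS, hbi⟩)

end realize

section cells
variable (P : Fin n → Polynomial ℝ)

/-- the critical set: roots of the `P i` and of the pair polynomials for unfrozen pairs -/
noncomputable def crit : Finset ℝ :=
  (Finset.univ : Finset (Fin n)).biUnion (fun i => (P i).roots.toFinset) ∪
  ((Finset.univ : Finset (Fin n × Fin n)).filter
      (fun p => bb P p.1 ≠ 0 ∧ bb P p.2 ≠ 0)).biUnion
    (fun p => (Hp P p.1 p.2).roots.toFinset)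

lemma P_ne_of_uf {i : Fin n} (h : bb P i ≠ 0) : P i ≠ 0 := by
  intro h0
  apply h
  rw [bb, h0]
  simp

lemma Proot_mem_crit {i : Fin n} {x : ℝ} (hP : P i ≠ 0) (hx : (P i).eval x = 0) :
    x ∈ crit P := by
  apply Finset.mem_union_left
  rw [Finset.mem_biUnion]
  exact ⟨i, Finset.mem_univ i, Multiset.mem_toFinset.2 ((Polynomial.mem_roots hP).2 hx)⟩

lemma Hproot_mem_crit {i j : Fin n} {x : ℝ} (hbi : bb P i ≠ 0) (hbj : bb P j ≠ 0)
    (hH : Hp P i j ≠ 0) (hx : (Hp P i j).eval x = 0) : x ∈ crit P := by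
  apply Finset.mem_union_right
  rw [Finset.mem_biUnion]
  refine ⟨(i, j), ?_, Multiset.mem_toFinset.2 ((Polynomial.mem_roots hH).2 hx)⟩
  rw [Finset.mem_filter]
  exact ⟨Finset.mem_univ _, hbi, hbj⟩

lemma FzC_of_nocrit {Δ : Set ℝ} (hΔ : Δ.OrdConnected) (hno : ∀ x ∈ Δ, x ∉ crit P) :
    FzC P Δ := by
  intro i hbi
  by_cases hP : P i = 0
  · left; intro δ _; rw [hP]; simp
  · have hne : ∀ x ∈ Δ, (P i).eval x ≠ 0 := by
      intro x hx h0
      exact hno x hx (Proot_mem_crit P hP h0)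
    rcases poly_sign_const hΔ hne with h | h
    · left; exact fun δ hδ => (h δ hδ).le
    · right; exact h

lemma Dich_of_nocrit {Δ : Set ℝ} (hΔ : Δ.OrdConnected) (hno : ∀ x ∈ Δ, x ∉ crit P) :
    Dich P Δ := by
  refine dich_of_signs P hΔ (FzC_of_nocrit P hΔ hno) ?_
  intro i j hbi hbj hH δ hδ h0
  exact hno δ hδ (Hproot_mem_crit P hbi hbj hH h0)

/-- W is constant on critical-free order-connected regions -/
lemma W_const {Δ : Set ℝ} (hΔ : Δ.OrdConnected) (hno : ∀ x ∈ Δ, x ∉ crit P)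
    {δ δ' : ℝ} (hδ : δ ∈ Δ) (hδ' : δ' ∈ Δ) : W P δ ⊆ W P δ' := by
  rintro u ⟨c, hc, rfl⟩
  have hFzC := FzC_of_nocrit P hΔ hno
  have hreal := realize P δ' (Sset P (val P δ c)) ?_ ?_ ?_
  · obtain ⟨c', hc', hS⟩ := hreal
    exact ⟨c', hc', (eq_of_Sset_eq P hS.symm)⟩
  · -- frozen
    intro i hbi
    rw [← sw_iff_mem_Sset, sw_frozen P hbi]
    rcases hFzC i hbi with h | h
    · simp only [h δ hδ, h δ' hδ']
    · simp only [not_le.2 (h δ hδ), not_le.2 (h δ' hδ')]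
  · -- R
    intro i hiS j hjS hbi hbj
    have hRδ : Rrel P i j δ := by
      refine ⟨c, hc, ?_, ?_⟩
      · rw [sw_iff_mem_Sset]; exact hiS
      · rw [sw_iff_mem_Sset]; exact hjS
    refine Rrel_transfer P hbi hbj hΔ ?_ ?_ hδ hδ' hRδ
    · intro x hx h0
      exact hno x hx (Proot_mem_crit P (P_ne_of_uf P hbj) h0)
    · by_cases hH : Hp P i j = 0
      · exact Or.inl hH
      · exact Or.inr (fun x hx h0 => hno x hx (Hproot_mem_crit P hbi hbj hH h0))
  · -- N
    intro j hjS hbj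
    have hNδ : Nrel P j δ := by
      refine ⟨c, hc, ?_⟩
      rw [sw_iff_mem_Sset]; exact hjS
    refine Nrel_transfer P hbj hΔ ?_ hδ hδ' hNδ
    intro x hx h0
    exact hno x hx (Proot_mem_crit P (P_ne_of_uf P hbj) h0)

/-- left and right cell boundaries around a critical point -/
noncomputable def prevB (ρ : ℝ) : ℝ :=
  if h : (((crit P)).filter (fun x => x < ρ)).Nonempty
  then (((crit P)).filter (fun x => x < ρ)).max' h else ρ - 1

noncomputable def nextB (ρ : ℝ) : ℝ :=
  if h : (((crit P)).filter (fun x => ρ < x)).Nonempty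
  then (((crit P)).filter (fun x => ρ < x)).min' h else ρ + 1

lemma prevB_lt (ρ : ℝ) : prevB P ρ < ρ := by
  unfold prevB
  split
  · next h =>
      have := Finset.max'_mem _ h
      rw [Finset.mem_filter] at this
      exact this.2
  · linarith

lemma lt_nextB (ρ : ℝ) : ρ < nextB P ρ := by
  unfold nextB
  split
  · next h =>
      have := Finset.min'_mem _ h
      rw [Finset.mem_filter] at this
      exact this.2
  · linarith

lemma Lcell_nocrit (ρ : ℝ) : ∀ x ∈ Set.Ioo (prevB P ρ) ρ, x ∉ crit P := by
  intro x hx hxc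
  have hfilter : x ∈ ((crit P)).filter (fun y => y < ρ) :=
    Finset.mem_filter.2 ⟨hxc, hx.2⟩
  have hne : (((crit P)).filter (fun y => y < ρ)).Nonempty := ⟨x, hfilter⟩
  have hle : x ≤ prevB P ρ := by
    unfold prevB
    rw [dif_pos hne]
    exact Finset.le_max' _ x hfilter
  linarith [hx.1]

lemma Rcell_nocrit (ρ : ℝ) : ∀ x ∈ Set.Ioo ρ (nextB P ρ), x ∉ crit P := by
  intro x hx hxc
  have hfilter : x ∈ ((crit P)).filter (fun y => ρ < y) :=
    Finset.mem_filter.2 ⟨hxc, hx.1⟩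
  have hne : (((crit P)).filter (fun y => ρ < y)).Nonempty := ⟨x, hfilter⟩
  have hle : nextB P ρ ≤ x := by
    unfold nextB
    rw [dif_pos hne]
    exact Finset.min'_le _ x hfilter
  linarith [hx.2]

end cells

section decomp
variable (P : Fin n → Polynomial ℝ)

noncomputable def midL (ρ : ℝ) : ℝ := (prevB P ρ + ρ) / 2
noncomputable def midR (ρ : ℝ) : ℝ := (ρ + nextB P ρ) / 2

lemma midL_mem (ρ : ℝ) : midL P ρ ∈ Set.Ioo (prevB P ρ) ρ := by
  have := prevB_lt P ρ
  constructor <;> (unfold midL; linarith)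

lemma midR_mem (ρ : ℝ) : midR P ρ ∈ Set.Ioo ρ (nextB P ρ) := by
  have := lt_nextB P ρ
  constructor <;> (unfold midR; linarith)

def Ch1 (ρ : ℝ) : Set (Fin n → Fin 2) := W P ρ \ W P (midL P ρ)
def Ch2 (ρ : ℝ) : Set (Fin n → Fin 2) := W P (midR P ρ) \ W P ρ

noncomputable def m0 : ℝ := if h : (crit P).Nonempty then (crit P).min' h - 1 else 0

/-- The master decomposition. -/
lemma decomp : Uset P ⊆ W P (m0 P) ∪ ⋃ ρ ∈ crit P, (Ch1 P ρ ∪ Ch2 P ρ) := by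
  intro u hu
  rw [mem_Uset_iff] at hu
  obtain ⟨δ₀, hδ₀⟩ := hu
  by_cases hcr : (crit P).Nonempty
  · set m := (crit P).min' hcr with hm
    by_cases hbelow : ∃ δ, u ∈ W P δ ∧ δ < m
    · left
      obtain ⟨δ, hδ, hδm⟩ := hbelow
      have hno : ∀ y ∈ Set.Iio m, y ∉ crit P := by
        intro y hy hyc
        exact absurd (Finset.min'_le _ y hyc) (not_le.2 hy)
      have hm0 : m0 P = m - 1 := by unfold m0; rw [dif_pos hcr]
      have : u ∈ W P (m - 1) :=
        W_const P Set.ordConnected_Iio hno hδm (by simp : m - 1 ∈ Set.Iio m) hδ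
      rwa [hm0]
    · push_neg at hbelow
      set D := {δ | u ∈ W P δ} with hD
      have hDne : D.Nonempty := ⟨δ₀, hδ₀⟩
      have hbdd : BddBelow D := ⟨m, fun δ hδ => hbelow δ hδ⟩
      set a := sInf D with ha
      have ham : m ≤ a := le_csInf hDne (fun δ hδ => hbelow δ hδ)
      by_cases hacrit : a ∈ crit P
      · by_cases haD : u ∈ W P a
        · right
          refine Set.mem_biUnion hacrit (Or.inl ⟨haD, ?_⟩)
          intro hmid
          have h1 : a ≤ midL P a := csInf_le hbdd hmid
          have h2 := (midL_mem P a).2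
          linarith
        · right
          refine Set.mem_biUnion hacrit (Or.inr ⟨?_, haD⟩)
          have hlt : sInf D < nextB P a := lt_of_le_of_lt (le_of_eq ha.symm)
            (lt_of_le_of_lt (le_refl a) (lt_nextB P a))
          obtain ⟨δ, hδD, hδlt⟩ := (csInf_lt_iff hbdd hDne).1 hlt
          have haδ : a ≤ δ := csInf_le hbdd hδD
          have hane : a ≠ δ := by
            intro h; rw [← h] at hδD; exact haD hδD
          have hmem : δ ∈ Set.Ioo a (nextB P a) := ⟨lt_of_le_of_ne haδ hane, hδlt⟩
          exact W_const P Set.ordConnected_Ioo (Rcell_nocrit P a) hmem (midR_mem P a) hδD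
      · exfalso
        have hma : m < a := by
          rcases lt_or_eq_of_le ham with h | h
          · exact h
          · exact absurd (h ▸ Finset.min'_mem _ hcr) hacrit
        set Fl := (crit P).filter (fun x => x < a) with hFl
        have hFlne : Fl.Nonempty := ⟨m, Finset.mem_filter.2 ⟨Finset.min'_mem _ hcr, hma⟩⟩
        set ρ := Fl.max' hFlne with hρ
        have hρmem := Finset.max'_mem Fl hFlne
        rw [Finset.mem_filter] at hρmem
        have hρa : ρ < a := hρmem.2
        -- pick the upper bound of the critical-free zone containing a
        have key : ∃ bnd, a < bnd ∧ ∀ y ∈ Set.Ioo ρ bnd, y ∉ crit P := by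
          by_cases hf : ((crit P).filter (fun x => ρ < x)).Nonempty
          · have hnb : nextB P ρ = ((crit P).filter (fun x => ρ < x)).min' hf := by
              unfold nextB; rw [dif_pos hf]
            have hmin'mem := Finset.min'_mem _ hf
            rw [Finset.mem_filter] at hmin'mem
            have hge : a ≤ ((crit P).filter (fun x => ρ < x)).min' hf := by
              by_contra hlt
              push_neg at hlt
              have : ((crit P).filter (fun x => ρ < x)).min' hf ∈ Fl :=
                Finset.mem_filter.2 ⟨hmin'mem.1, hlt⟩
              have := Finset.le_max' Fl _ this
              rw [← hρ] at this
              exact absurd this (not_le.2 hmin'mem.2)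
            have hgt : a < ((crit P).filter (fun x => ρ < x)).min' hf := by
              rcases lt_or_eq_of_le hge with h | h
              · exact h
              · exact absurd (h ▸ hmin'mem.1) hacrit
            refine ⟨nextB P ρ, by rw [hnb]; exact hgt, Rcell_nocrit P ρ⟩
          · refine ⟨a + 1, by linarith, ?_⟩
            intro y hy hyc
            exact hf ⟨y, Finset.mem_filter.2 ⟨hyc, hy.1⟩⟩
        obtain ⟨bnd, habnd, hno⟩ := key
        obtain ⟨δ, hδD, hδlt⟩ := (csInf_lt_iff hbdd hDne).1
          (lt_of_le_of_lt (le_of_eq ha.symm) habnd)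
        have haδ : a ≤ δ := csInf_le hbdd hδD
        have hδmem : δ ∈ Set.Ioo ρ bnd := ⟨lt_of_lt_of_le hρa haδ, hδlt⟩
        have hmidmem : (ρ + a)/2 ∈ Set.Ioo ρ bnd := ⟨by linarith, by linarith⟩
        have : u ∈ W P ((ρ + a)/2) :=
          W_const P Set.ordConnected_Ioo hno hδmem hmidmem hδD
        have h1 : a ≤ (ρ + a)/2 := csInf_le hbdd this
        linarith
  · left
    have hno : ∀ y ∈ (Set.univ : Set ℝ), y ∉ crit P := by
      intro y _ hyc
      exact hcr ⟨y, hyc⟩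
    exact W_const P Set.ordConnected_univ hno (Set.mem_univ δ₀) (Set.mem_univ (m0 P)) hδ₀

end decomp

section perpoint
variable (P : Fin n → Polynomial ℝ)

lemma Dich_singleton (ρ : ℝ) : Dich P {ρ} := by
  intro i j
  rcases ray_comparable P ρ i j with h | h
  · right; intro δ hδ c _ hc
    rw [Set.mem_singleton_iff] at hδ; subst hδ
    exact h c hc
  · left; intro δ hδ c _ hc
    rw [Set.mem_singleton_iff] at hδ; subst hδ
    exact h c hc

lemma FzC_singleton (ρ : ℝ) : FzC P {ρ} := by
  intro i _
  rcases le_or_gt 0 ((P i).eval ρ) with h | h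
  · left; intro δ hδ; rw [Set.mem_singleton_iff] at hδ; subst hδ; exact h
  · right; intro δ hδ; rw [Set.mem_singleton_iff] at hδ; subst hδ; exact h

lemma W_eq_WU_singleton (ρ : ℝ) : W P ρ = WU P {ρ} := by
  ext u; rw [mem_WU_iff]
  constructor
  · rintro ⟨c, hc, rfl⟩; exact ⟨ρ, rfl, c, hc, rfl⟩
  · rintro ⟨δ, hδ, c, hc, rfl⟩
    rw [Set.mem_singleton_iff] at hδ; subst hδ; exact ⟨c, hc, rfl⟩

lemma W_ncard (ρ : ℝ) : (W P ρ).ncard ≤ (ufz P).card + 1 := by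
  rw [W_eq_WU_singleton]
  exact WU_ncard_le P (Dich_singleton P ρ) (FzC_singleton P ρ)

/-- members of a single W δ have comparable switch sets -/
lemma W_chain {ρ : ℝ} {u u' : Fin n → Fin 2} (hu : u ∈ W P ρ) (hu' : u' ∈ W P ρ) :
    Sset P u ⊆ Sset P u' ∨ Sset P u' ⊆ Sset P u := by
  have h := chain_of_dich P (Dich_singleton P ρ) u ?_ u' ?_
  · exact h
  · rw [← W_eq_WU_singleton]; exact hu
  · rw [← W_eq_WU_singleton]; exact hu'

lemma frozen_mem_const {ρ : ℝ} {u u' : Fin n → Fin 2} (hu : u ∈ W P ρ) (hu' : u' ∈ W P ρ)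
    {i : Fin n} (hbi : bb P i = 0) : i ∈ Sset P u ↔ i ∈ Sset P u' := by
  obtain ⟨c, hc, rfl⟩ := hu
  obtain ⟨c', hc', rfl⟩ := hu'
  rw [← sw_iff_mem_Sset, ← sw_iff_mem_Sset, sw_frozen P hbi, sw_frozen P hbi]

/-- membership in W spreads over the right cell -/
lemma W_rcell {ρ : ℝ} {u : Fin n → Fin 2} (hu : u ∈ W P (midR P ρ)) :
    ∀ δ ∈ Set.Ioo ρ (nextB P ρ), u ∈ W P δ := by
  intro δ hδ
  exact W_const P Set.ordConnected_Ioo (Rcell_nocrit P ρ) (midR_mem P ρ) hδ hu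

/-- if the realization data holds at ρ for the switch set of u, then u ∈ W ρ -/
lemma mem_W_of_data (ρ : ℝ) (u : Fin n → Fin 2)
    (hfz : ∀ i : Fin n, bb P i = 0 → (i ∈ Sset P u ↔ 0 ≤ (P i).eval ρ))
    (hR : ∀ i ∈ Sset P u, ∀ j : Fin n, j ∉ Sset P u → bb P i ≠ 0 → bb P j ≠ 0 → Rrel P i j ρ)
    (hN : ∀ j : Fin n, j ∉ Sset P u → bb P j ≠ 0 → Nrel P j ρ) : u ∈ W P ρ := by
  obtain ⟨c, hc, hS⟩ := realize P ρ (Sset P u) hfz hR hN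
  exact ⟨c, hc, (eq_of_Sset_eq P hS.symm)⟩

/-- local charge Finsets at a point -/
noncomputable def Zu (ρ : ℝ) : Finset (Fin n) :=
  Finset.univ.filter (fun i => bb P i ≠ 0 ∧ (P i).eval ρ = 0)

noncomputable def Fz (ρ : ℝ) : Finset (Fin n) :=
  Finset.univ.filter (fun i => bb P i = 0 ∧ P i ≠ 0 ∧ (P i).eval ρ = 0)

noncomputable def HonP (ρ : ℝ) : Finset (Fin n × Fin n) :=
  Finset.univ.filter (fun p => p.1 ≠ p.2 ∧ bb P p.1 ≠ 0 ∧ bb P p.2 ≠ 0 ∧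
    Hp P p.1 p.2 ≠ 0 ∧ (Hp P p.1 p.2).eval ρ = 0)

noncomputable def partnered (ρ : ℝ) : Finset (Fin n) :=
  Finset.univ.filter (fun x => bb P x ≠ 0 ∧ ∃ y : Fin n, x ≠ y ∧ bb P y ≠ 0 ∧
    Hp P x y ≠ 0 ∧ (Hp P x y).eval ρ = 0)

lemma partnered_card_le (ρ : ℝ) : (partnered P ρ).card ≤ (HonP P ρ).card := by
  classical
  have : ∀ x ∈ partnered P ρ, ∃ y : Fin n, (x, y) ∈ HonP P ρ := by
    intro x hx
    rw [partnered, Finset.mem_filter] at hx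
    obtain ⟨_, hbx, y, hxy, hby, hH, hHe⟩ := hx
    exact ⟨y, Finset.mem_filter.2 ⟨Finset.mem_univ _, hxy, hbx, hby, hH, hHe⟩⟩
  choose f hf using this
  have hinj : Set.InjOn (fun x : {x // x ∈ partnered P ρ} => (x.1, f x.1 x.2)) Set.univ := by
    intro x _ y _ h
    simp only [Prod.mk.injEq] at h
    exact Subtype.ext h.1
  calc (partnered P ρ).card = Fintype.card {x // x ∈ partnered P ρ} :=
        (Fintype.card_coe _).symm
    _ ≤ Fintype.card {p // p ∈ HonP P ρ} := by
        apply Fintype.card_le_of_injective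
          (fun x : {x // x ∈ partnered P ρ} =>
            (⟨(x.1, f x.1 x.2), hf x.1 x.2⟩ : {p // p ∈ HonP P ρ}))
        intro x y h
        simp only [Subtype.mk.injEq, Prod.mk.injEq] at h
        exact Subtype.ext h.1
    _ = (HonP P ρ).card := Fintype.card_coe _

/-- partner existence within a tie fiber -/
lemma partner_exists {ρ t : ℝ} {l x y : Fin n} (hbl : bb P l ≠ 0)
    (hθl : θ P l ρ = t) (hxy : (x, y) ∈ HonP P ρ)
    (hθx : θ P x ρ = t) (hθy : θ P y ρ = t) : l ∈ partnered P ρ := by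
  rw [HonP, Finset.mem_filter] at hxy
  obtain ⟨_, hxyne, hbx, hby, hH, hHe⟩ := hxy
  rw [partnered, Finset.mem_filter]
  refine ⟨Finset.mem_univ _, hbl, ?_⟩
  by_cases hlx : l = x
  · subst hlx
    exact ⟨y, hxyne, hby, hH, hHe⟩
  by_cases hly : l = y
  · subst hly
    refine ⟨x, fun h => hxyne h.symm, hbx, ?_, ?_⟩
    · rw [Hp_anti]; simpa using hH
    · rw [Hp_anti]; simpa using hHe
  · have hlx0 : (Hp P l x).eval ρ = 0 := by
      rw [← theta_eq_iff P hbl hbx]; rw [hθl, hθx]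
    have hly0 : (Hp P l y).eval ρ = 0 := by
      rw [← theta_eq_iff P hbl hby]; rw [hθl, hθy]
    by_cases h1 : Hp P l x = 0
    · by_cases h2 : Hp P l y = 0
      · exfalso
        apply hH
        have hxl : Hp P x l = 0 := by rw [Hp_anti, h1]; simp
        exact Hp_trans P hbl hxl h2
      · exact ⟨y, hly, hby, h2, hly0⟩
    · exact ⟨x, hlx, hbx, h1, hlx0⟩

end perpoint

section count1
variable (P : Fin n → Polynomial ℝ)

lemma ncard_le_card_of_maps {α β : Type*} {A : Set α} {T : Finset β} {g : α → β}
    (hmap : ∀ a ∈ A, g a ∈ T) (hinj : Set.InjOn g A) : A.ncard ≤ T.card := by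
  calc A.ncard = (g '' A).ncard := (Set.ncard_image_of_injOn hinj).symm
    _ ≤ (↑T : Set β).ncard := Set.ncard_le_ncard
        (by rintro x ⟨a, ha, rfl⟩; exact hmap a ha) T.finite_toSet
    _ = T.card := Set.ncard_coe_finset T

lemma Rrel_Pj_ne {i j : Fin n} (hbi : bb P i ≠ 0) (hbj : bb P j ≠ 0) {δ : ℝ}
    (h : Rrel P i j δ) : (P j).eval δ ≠ 0 := by
  rcases lt_or_gt_of_ne hbi with hi | hi <;> rcases lt_or_gt_of_ne hbj with hj | hj
  · rw [Rrel_nn P hi hj] at h; exact ne_of_gt h.1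
  · rw [Rrel_np P hi hj] at h; exact ne_of_lt h.1
  · rw [Rrel_pn P hi hj] at h; exact ne_of_gt h.1
  · rw [Rrel_pp P hi hj] at h; exact ne_of_lt h.1

lemma Nrel_Pj_ne {j : Fin n} (hbj : bb P j ≠ 0) {δ : ℝ}
    (h : Nrel P j δ) : (P j).eval δ ≠ 0 := by
  rcases lt_or_gt_of_ne hbj with hj | hj
  · rw [Nrel_neg P hj] at h; exact ne_of_gt h
  · rw [Nrel_pos P hj] at h; exact ne_of_lt h

lemma Fz_empty_ne {ρ : ℝ} (hFz : Fz P ρ = ∅) {i : Fin n} (hbi : bb P i = 0)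
    (hP : P i ≠ 0) : (P i).eval ρ ≠ 0 := by
  intro h0
  have : i ∈ Fz P ρ := Finset.mem_filter.2 ⟨Finset.mem_univ _, hbi, hP, h0⟩
  rw [hFz] at this
  exact absurd this (Finset.notMem_empty i)

/-- each element of Ch1 is the value at an honest tie -/
lemma ch1_elem {ρ : ℝ} (hFz : Fz P ρ = ∅) {u : Fin n → Fin 2} (hu : u ∈ Ch1 P ρ) :
    ∃ p ∈ HonP P ρ, u = val P ρ (θ P p.2 ρ) := by
  obtain ⟨huW, huL⟩ := hu
  by_cases hex : ∃ i ∈ Sset P u, ∃ j : Fin n, j ∉ Sset P u ∧ bb P i ≠ 0 ∧ bb P j ≠ 0 ∧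
      Hp P i j ≠ 0 ∧ (Hp P i j).eval ρ = 0
  · obtain ⟨i, hiS, j, hjS, hbi, hbj, hH, hHe⟩ := hex
    have hij : i ≠ j := fun h => hjS (h ▸ hiS)
    refine ⟨(i,j), Finset.mem_filter.2 ⟨Finset.mem_univ _, hij, hbi, hbj, hH, hHe⟩, ?_⟩
    have hθ : θ P i ρ = θ P j ρ := (theta_eq_iff P hbi hbj ρ).2 hHe
    obtain ⟨c₀, hc₀, rfl⟩ := huW
    have hswi : sw P i ρ c₀ := (sw_iff_mem_Sset P i ρ c₀).2 hiS
    have hswj : ¬ sw P j ρ c₀ := fun h => hjS ((sw_iff_mem_Sset P j ρ c₀).1 h)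
    have hc : c₀ = θ P j ρ := by
      rcases lt_or_gt_of_ne hbi with hi' | hi' <;> rcases lt_or_gt_of_ne hbj with hj' | hj'
      · rw [sw_neg_theta P hi'] at hswi
        rw [sw_neg_theta P hj'] at hswj
        push_neg at hswj
        exfalso; rw [hθ] at hswi; linarith
      · rw [sw_neg_theta P hi'] at hswi
        rw [sw_pos_theta P hj'] at hswj
        push_neg at hswj
        exfalso; rw [hθ] at hswi; linarith
      · rw [sw_pos_theta P hi'] at hswi
        rw [sw_neg_theta P hj'] at hswj
        push_neg at hswj
        rw [hθ] at hswi; linarith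
      · rw [sw_pos_theta P hi'] at hswi
        rw [sw_pos_theta P hj'] at hswj
        push_neg at hswj
        exfalso; rw [hθ] at hswi; linarith
    rw [hc]
  · exfalso
    apply huL
    push_neg at hex
    obtain ⟨c₀, hc₀, hurep⟩ := huW
    set Δ' : Set ℝ := Set.Ioc (prevB P ρ) ρ with hΔ'
    have hord : Δ'.OrdConnected := Set.ordConnected_Ioc
    have hρΔ : ρ ∈ Δ' := ⟨prevB_lt P ρ, le_rfl⟩
    have hmidΔ : midL P ρ ∈ Δ' := ⟨(midL_mem P ρ).1, (midL_mem P ρ).2.le⟩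
    have hIoo : ∀ x ∈ Δ', x ≠ ρ → x ∉ crit P := by
      intro x hx hxρ
      exact Lcell_nocrit P ρ x ⟨hx.1, lt_of_le_of_ne hx.2 hxρ⟩
    apply mem_W_of_data
    · -- frozen condition at midL
      intro i hbi
      have hmem : i ∈ Sset P u ↔ 0 ≤ (P i).eval ρ := by
        rw [hurep, ← sw_iff_mem_Sset, sw_frozen P hbi]
      by_cases hP : P i = 0
      · rw [hmem, hP]; simp
      · have hne : ∀ x ∈ Δ', (P i).eval x ≠ 0 := by
          intro x hx
          by_cases hxρ : x = ρ
          · subst hxρ; exact Fz_empty_ne P hFz hbi hP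
          · intro h0; exact hIoo x hx hxρ (Proot_mem_crit P hP h0)
        rcases poly_sign_const hord hne with h | h
        · rw [hmem]
          exact iff_of_true (h ρ hρΔ).le (h _ hmidΔ).le
        · rw [hmem]
          exact iff_of_false (not_le.2 (h ρ hρΔ)) (not_le.2 (h _ hmidΔ))
    · -- R condition at midL
      intro i hiS j hjS hbi hbj
      have hRρ : Rrel P i j ρ := by
        refine ⟨c₀, hc₀, ?_, ?_⟩
        · rw [sw_iff_mem_Sset, ← hurep]; exact hiS
        · rw [sw_iff_mem_Sset, ← hurep]; exact hjS
      refine Rrel_transfer P hbi hbj hord ?_ ?_ hρΔ hmidΔ hRρ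
      · intro x hx
        by_cases hxρ : x = ρ
        · subst hxρ; exact Rrel_Pj_ne P hbi hbj hRρ
        · intro h0; exact hIoo x hx hxρ (Proot_mem_crit P (P_ne_of_uf P hbj) h0)
      · by_cases hH : Hp P i j = 0
        · exact Or.inl hH
        · refine Or.inr (fun x hx h0 => ?_)
          by_cases hxρ : x = ρ
          · subst hxρ
            exact hex i hiS j hjS hbi hbj hH h0
          · exact hIoo x hx hxρ (Hproot_mem_crit P hbi hbj hH h0)
    · -- N condition at midL
      intro j hjS hbj
      have hNρ : Nrel P j ρ := by
        refine ⟨c₀, hc₀, ?_⟩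
        rw [sw_iff_mem_Sset, ← hurep]; exact hjS
      refine Nrel_transfer P hbj hord ?_ hρΔ hmidΔ hNρ
      intro x hx
      by_cases hxρ : x = ρ
      · subst hxρ; exact Nrel_Pj_ne P hbj hNρ
      · intro h0; exact hIoo x hx hxρ (Proot_mem_crit P (P_ne_of_uf P hbj) h0)

lemma ch1_bound {ρ : ℝ} (hFz : Fz P ρ = ∅) :
    (Ch1 P ρ).ncard ≤ ((HonP P ρ).image (fun p => θ P p.2 ρ)).card := by
  have hsub : Ch1 P ρ ⊆ (fun t => val P ρ t) '' ↑((HonP P ρ).image (fun p => θ P p.2 ρ)) := by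
    intro u hu
    obtain ⟨p, hp, hval⟩ := ch1_elem P hFz hu
    refine ⟨θ P p.2 ρ, ?_, hval.symm⟩
    simp only [Finset.coe_image, Set.mem_image, Finset.mem_coe]
    exact ⟨p, hp, rfl⟩
  calc (Ch1 P ρ).ncard
      ≤ ((fun t => val P ρ t) '' ↑((HonP P ρ).image (fun p => θ P p.2 ρ))).ncard :=
        Set.ncard_le_ncard hsub (((HonP P ρ).image _).finite_toSet.image _)
    _ ≤ (↑((HonP P ρ).image (fun p => θ P p.2 ρ)) : Set ℝ).ncard :=
        Set.ncard_image_le (((HonP P ρ).image _).finite_toSet)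
    _ = _ := Set.ncard_coe_finset _

end count1

section count2
variable (P : Fin n → Polynomial ℝ)

noncomputable def Tfib (ρ t : ℝ) : Finset (Fin n) :=
  Finset.univ.filter (fun l => bb P l ≠ 0 ∧ θ P l ρ = t)

lemma Tfib_disj {ρ t t' : ℝ} (h : t ≠ t') : Disjoint (Tfib P ρ t) (Tfib P ρ t') := by
  rw [Finset.disjoint_left]
  intro l hl hl'
  rw [Tfib, Finset.mem_filter] at hl hl'
  exact h (hl.2.2 ▸ hl'.2.2 ▸ rfl)

lemma rrel_on_rcell {ρ : ℝ} {u : Fin n → Fin 2} (hu : u ∈ W P (midR P ρ))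
    {x l : Fin n} (hx : x ∈ Sset P u) (hl : l ∉ Sset P u) :
    ∀ δ ∈ Set.Ioo ρ (nextB P ρ), Rrel P x l δ := by
  intro δ hδ
  obtain ⟨c, hc, hrep⟩ := W_rcell P hu δ hδ
  refine ⟨c, hc, ?_, ?_⟩
  · rw [sw_iff_mem_Sset, ← hrep]; exact hx
  · rw [sw_iff_mem_Sset, ← hrep]; exact hl

lemma nrel_on_rcell {ρ : ℝ} {u : Fin n → Fin 2} (hu : u ∈ W P (midR P ρ))
    {l : Fin n} (hl : l ∉ Sset P u) :
    ∀ δ ∈ Set.Ioo ρ (nextB P ρ), Nrel P l δ := by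
  intro δ hδ
  obtain ⟨c, hc, hrep⟩ := W_rcell P hu δ hδ
  refine ⟨c, hc, ?_⟩
  rw [sw_iff_mem_Sset, ← hrep]; exact hl

lemma sset_uf_of_diff {ρ : ℝ} {u u' : Fin n → Fin 2} (hu : u ∈ W P (midR P ρ))
    (hu' : u' ∈ W P (midR P ρ)) {l : Fin n} (hl : l ∈ Sset P u') (hl2 : l ∉ Sset P u) :
    bb P l ≠ 0 := by
  intro hbl
  exact hl2 ((frozen_mem_const P hu' hu hbl).1 hl)

/-- failure analysis for elements of Ch2 whose switch set contains all unfrozen roots -/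
lemma ch2_elem {ρ : ℝ} (hFz : Fz P ρ = ∅) {u : Fin n → Fin 2} (hu : u ∈ Ch2 P ρ)
    (hB : Zu P ρ ⊆ Sset P u) :
    ∃ i ∈ Sset P u, ∃ j : Fin n, j ∉ Sset P u ∧ (i, j) ∈ HonP P ρ := by
  obtain ⟨huR, huρ⟩ := hu
  by_cases hex : ∃ i ∈ Sset P u, ∃ j : Fin n, j ∉ Sset P u ∧ bb P i ≠ 0 ∧ bb P j ≠ 0 ∧
      Hp P i j ≠ 0 ∧ (Hp P i j).eval ρ = 0
  · obtain ⟨i, hiS, j, hjS, hbi, hbj, hH, hHe⟩ := hex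
    have hij : i ≠ j := fun h => hjS (h ▸ hiS)
    exact ⟨i, hiS, j, hjS, Finset.mem_filter.2 ⟨Finset.mem_univ _, hij, hbi, hbj, hH, hHe⟩⟩
  · exfalso
    apply huρ
    push_neg at hex
    obtain ⟨c₀, hc₀, hurep⟩ := huR
    set Δ' : Set ℝ := Set.Ico ρ (nextB P ρ) with hΔ'
    have hord : Δ'.OrdConnected := Set.ordConnected_Ico
    have hρΔ : ρ ∈ Δ' := ⟨le_rfl, lt_nextB P ρ⟩
    have hmidΔ : midR P ρ ∈ Δ' := ⟨(midR_mem P ρ).1.le, (midR_mem P ρ).2⟩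
    have hIoo : ∀ x ∈ Δ', x ≠ ρ → x ∉ crit P := by
      intro x hx hxρ
      exact Rcell_nocrit P ρ x ⟨lt_of_le_of_ne hx.1 (Ne.symm hxρ), hx.2⟩
    apply mem_W_of_data
    · -- frozen condition at ρ
      intro i hbi
      have hmem : i ∈ Sset P u ↔ 0 ≤ (P i).eval (midR P ρ) := by
        rw [hurep, ← sw_iff_mem_Sset, sw_frozen P hbi]
      by_cases hP : P i = 0
      · rw [hmem, hP]; simp
      · have hne : ∀ x ∈ Δ', (P i).eval x ≠ 0 := by
          intro x hx
          by_cases hxρ : x = ρ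
          · subst hxρ; exact Fz_empty_ne P hFz hbi hP
          · intro h0; exact hIoo x hx hxρ (Proot_mem_crit P hP h0)
        rcases poly_sign_const hord hne with h | h
        · rw [hmem]
          exact iff_of_true (h _ hmidΔ).le (h ρ hρΔ).le
        · rw [hmem]
          exact iff_of_false (not_le.2 (h _ hmidΔ)) (not_le.2 (h ρ hρΔ))
    · -- R condition at ρ
      intro i hiS j hjS hbi hbj
      have hRm : Rrel P i j (midR P ρ) := by
        refine ⟨c₀, hc₀, ?_, ?_⟩
        · rw [sw_iff_mem_Sset, ← hurep]; exact hiS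
        · rw [sw_iff_mem_Sset, ← hurep]; exact hjS
      have hPjρ : (P j).eval ρ ≠ 0 := by
        intro h0
        exact hjS (hB (Finset.mem_filter.2 ⟨Finset.mem_univ _, hbj, h0⟩))
      refine Rrel_transfer P hbi hbj hord ?_ ?_ hmidΔ hρΔ hRm
      · intro x hx
        by_cases hxρ : x = ρ
        · subst hxρ; exact hPjρ
        · intro h0; exact hIoo x hx hxρ (Proot_mem_crit P (P_ne_of_uf P hbj) h0)
      · by_cases hH : Hp P i j = 0
        · exact Or.inl hH
        · refine Or.inr (fun x hx h0 => ?_)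
          by_cases hxρ : x = ρ
          · subst hxρ
            exact hex i hiS j hjS hbi hbj hH h0
          · exact hIoo x hx hxρ (Hproot_mem_crit P hbi hbj hH h0)
    · -- N condition at ρ
      intro j hjS hbj
      have hNm : Nrel P j (midR P ρ) := by
        refine ⟨c₀, hc₀, ?_⟩
        rw [sw_iff_mem_Sset, ← hurep]; exact hjS
      have hPjρ : (P j).eval ρ ≠ 0 := by
        intro h0
        exact hjS (hB (Finset.mem_filter.2 ⟨Finset.mem_univ _, hbj, h0⟩))
      refine Nrel_transfer P hbj hord ?_ hmidΔ hρΔ hNm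
      intro x hx
      by_cases hxρ : x = ρ
      · subst hxρ; exact hPjρ
      · intro h0; exact hIoo x hx hxρ (Proot_mem_crit P (P_ne_of_uf P hbj) h0)

private lemma ch2A_aux {ρ : ℝ} {u u' : Fin n → Fin 2}
    (huR : u ∈ W P (midR P ρ)) (hu'R : u' ∈ W P (midR P ρ))
    (hss : Sset P u ⊆ Sset P u')
    (hcard : (Sset P u' ∩ Zu P ρ).card ≤ (Sset P u ∩ Zu P ρ).card)
    (hA' : ¬ Zu P ρ ⊆ Sset P u') : u = u' := by
  have hinter : Sset P u ∩ Zu P ρ = Sset P u' ∩ Zu P ρ :=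
    Finset.eq_of_subset_of_card_le (Finset.inter_subset_inter hss (Finset.Subset.refl _)) hcard
  by_contra hne
  have hSne : Sset P u ≠ Sset P u' := fun h => hne (eq_of_Sset_eq P h)
  obtain ⟨l, hlS', hlS⟩ := Finset.exists_of_ssubset (lt_of_le_of_ne hss hSne)
  have hbl : bb P l ≠ 0 := sset_uf_of_diff P huR hu'R hlS' hlS
  obtain ⟨j, hjZ, hjS'⟩ := Finset.not_subset.1 hA'
  have hjZ' := hjZ
  rw [Zu, Finset.mem_filter] at hjZ'
  obtain ⟨_, hbj, hPjρ⟩ := hjZ'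
  have hlroot : (P l).eval ρ = 0 := by
    refine root_squeeze P hbl hbj (lt_nextB P ρ) ?_ ?_ hPjρ
    · exact nrel_on_rcell P huR hlS
    · exact rrel_on_rcell P hu'R hlS' hjS'
  have hlZ : l ∈ Zu P ρ := Finset.mem_filter.2 ⟨Finset.mem_univ _, hbl, hlroot⟩
  have : l ∈ Sset P u ∩ Zu P ρ := hinter ▸ Finset.mem_inter.2 ⟨hlS', hlZ⟩
  exact hlS (Finset.mem_inter.1 this).1

lemma ch2A_bound (ρ : ℝ) :
    {u | u ∈ Ch2 P ρ ∧ ¬ Zu P ρ ⊆ Sset P u}.ncard ≤ (Zu P ρ).card := by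
  rw [← Finset.card_range (Zu P ρ).card]
  apply ncard_le_card_of_maps (T := Finset.range (Zu P ρ).card)
    (g := fun u => (Sset P u ∩ Zu P ρ).card)
  · rintro u ⟨huC, huA⟩
    rw [Finset.mem_range]
    apply Finset.card_lt_card
    rw [Finset.ssubset_iff_of_subset (Finset.inter_subset_right)]
    obtain ⟨j, hjZ, hjS⟩ := Finset.not_subset.1 huA
    exact ⟨j, hjZ, fun hmem => hjS (Finset.mem_inter.1 hmem).1⟩
  · rintro u ⟨huC, huA⟩ u' ⟨hu'C, hu'A⟩ heq
    simp only at heq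
    rcases W_chain P huC.1 hu'C.1 with hss | hss
    · exact ch2A_aux P huC.1 hu'C.1 hss (le_of_eq heq.symm) hu'A
    · exact (ch2A_aux P hu'C.1 huC.1 hss (le_of_eq heq) huA).symm

end count2

section count3
variable (P : Fin n → Polynomial ℝ)

noncomputable def tvals (ρ : ℝ) : Finset ℝ := (HonP P ρ).image (fun p => θ P p.2 ρ)

def Bdata (ρ : ℝ) (u : Fin n → Fin 2) : Prop :=
  ∃ t ∈ tvals P ρ, (∃ i ∈ Sset P u, i ∈ Tfib P ρ t) ∧ (∃ j : Fin n, j ∉ Sset P u ∧ j ∈ Tfib P ρ t)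

lemma ch2B_data {ρ : ℝ} (hFz : Fz P ρ = ∅) {u : Fin n → Fin 2} (hu : u ∈ Ch2 P ρ)
    (hB : Zu P ρ ⊆ Sset P u) : Bdata P ρ u := by
  obtain ⟨i, hiS, j, hjS, hp⟩ := ch2_elem P hFz hu hB
  have hp' := hp
  rw [HonP, Finset.mem_filter] at hp'
  obtain ⟨_, hij, hbi, hbj, hH, hHe⟩ := hp'
  refine ⟨θ P j ρ, Finset.mem_image.2 ⟨(i,j), hp, rfl⟩, ⟨i, hiS, ?_⟩, ⟨j, hjS, ?_⟩⟩
  · exact Finset.mem_filter.2 ⟨Finset.mem_univ _, hbi, (theta_eq_iff P hbi hbj ρ).2 hHe⟩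
  · exact Finset.mem_filter.2 ⟨Finset.mem_univ _, hbj, rfl⟩

noncomputable def tch (ρ : ℝ) (u : Fin n → Fin 2) : ℝ :=
  @dite _ (Bdata P ρ u) (Classical.dec _) (fun h => h.choose) (fun _ => 0)

lemma tch_spec {ρ : ℝ} {u : Fin n → Fin 2} (h : Bdata P ρ u) :
    tch P ρ u ∈ tvals P ρ ∧ (∃ i ∈ Sset P u, i ∈ Tfib P ρ (tch P ρ u)) ∧
      (∃ j : Fin n, j ∉ Sset P u ∧ j ∈ Tfib P ρ (tch P ρ u)) := by
  rw [tch, dif_pos h]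
  exact h.choose_spec

private lemma ch2B_aux {ρ : ℝ} {u u' : Fin n → Fin 2}
    (huR : u ∈ W P (midR P ρ)) (hu'R : u' ∈ W P (midR P ρ))
    (hdu : Bdata P ρ u) (hdu' : Bdata P ρ u')
    (hss : Sset P u ⊆ Sset P u') (ht : tch P ρ u = tch P ρ u')
    (hcard : (Sset P u' ∩ Tfib P ρ (tch P ρ u)).card ≤ (Sset P u ∩ Tfib P ρ (tch P ρ u)).card) :
    u = u' := by
  have hinter : Sset P u ∩ Tfib P ρ (tch P ρ u) = Sset P u' ∩ Tfib P ρ (tch P ρ u) :=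
    Finset.eq_of_subset_of_card_le (Finset.inter_subset_inter hss (Finset.Subset.refl _)) hcard
  by_contra hne
  have hSne : Sset P u ≠ Sset P u' := fun h => hne (eq_of_Sset_eq P h)
  obtain ⟨l, hlS', hlS⟩ := Finset.exists_of_ssubset (lt_of_le_of_ne hss hSne)
  have hbl : bb P l ≠ 0 := sset_uf_of_diff P huR hu'R hlS' hlS
  obtain ⟨_, ⟨i, hiS, hiT⟩, _⟩ := tch_spec P hdu
  obtain ⟨_, _, ⟨j, hjS', hjT⟩⟩ := tch_spec P hdu'
  rw [← ht] at hjT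
  rw [Tfib, Finset.mem_filter] at hiT hjT
  obtain ⟨_, hbi, hθi⟩ := hiT
  obtain ⟨_, hbj, hθj⟩ := hjT
  have h1 : θ P i ρ ≤ θ P l ρ :=
    theta_mono_right P hbi hbl (lt_nextB P ρ) (rrel_on_rcell P huR hiS hlS)
  have h2 : θ P l ρ ≤ θ P j ρ :=
    theta_mono_right P hbl hbj (lt_nextB P ρ) (rrel_on_rcell P hu'R hlS' hjS')
  have hθl : θ P l ρ = tch P ρ u :=
    le_antisymm (by rw [← hθj]; exact h2) (by rw [← hθi]; exact h1)
  have hlT : l ∈ Tfib P ρ (tch P ρ u) :=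
    Finset.mem_filter.2 ⟨Finset.mem_univ _, hbl, hθl⟩
  have : l ∈ Sset P u ∩ Tfib P ρ (tch P ρ u) := hinter ▸ Finset.mem_inter.2 ⟨hlS', hlT⟩
  exact hlS (Finset.mem_inter.1 this).1

lemma ch2B_bound {ρ : ℝ} (hFz : Fz P ρ = ∅) :
    {u | u ∈ Ch2 P ρ ∧ Zu P ρ ⊆ Sset P u}.ncard ≤
      ∑ t ∈ tvals P ρ, ((Tfib P ρ t).card - 1) := by
  classical
  set T : Finset (ℝ × ℕ) :=
    (tvals P ρ).biUnion (fun t => ({t} : Finset ℝ) ×ˢ Finset.Icc 1 ((Tfib P ρ t).card - 1))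
    with hT
  have hcardT : T.card ≤ ∑ t ∈ tvals P ρ, ((Tfib P ρ t).card - 1) := by
    refine le_trans (Finset.card_biUnion_le) (Finset.sum_le_sum ?_)
    intro t _
    rw [Finset.card_product, Finset.card_singleton, one_mul, Nat.card_Icc]
    omega
  refine le_trans ?_ hcardT
  apply ncard_le_card_of_maps (T := T)
    (g := fun u => (tch P ρ u, (Sset P u ∩ Tfib P ρ (tch P ρ u)).card))
  · rintro u ⟨huC, huB⟩
    have hd := ch2B_data P hFz huC huB
    obtain ⟨htv, ⟨i, hiS, hiT⟩, ⟨j, hjS, hjT⟩⟩ := tch_spec P hd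
    rw [hT, Finset.mem_biUnion]
    refine ⟨tch P ρ u, htv, ?_⟩
    rw [Finset.mem_product, Finset.mem_singleton, Finset.mem_Icc]
    refine ⟨rfl, ?_, ?_⟩
    · exact Finset.card_pos.2 ⟨i, Finset.mem_inter.2 ⟨hiS, hiT⟩⟩
    · have hlt : (Sset P u ∩ Tfib P ρ (tch P ρ u)).card < (Tfib P ρ (tch P ρ u)).card := by
        apply Finset.card_lt_card
        rw [Finset.ssubset_iff_of_subset (Finset.inter_subset_right)]
        exact ⟨j, hjT, fun hmem => hjS (Finset.mem_inter.1 hmem).1⟩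
      omega
  · rintro u ⟨huC, huB⟩ u' ⟨hu'C, hu'B⟩ heq
    simp only [Prod.mk.injEq] at heq
    obtain ⟨ht, hcard⟩ := heq
    have hdu := ch2B_data P hFz huC huB
    have hdu' := ch2B_data P hFz hu'C hu'B
    rcases W_chain P huC.1 hu'C.1 with hss | hss
    · refine ch2B_aux P huC.1 hu'C.1 hdu hdu' hss ht ?_
      rw [ht]; rw [ht] at hcard; exact le_of_eq hcard.symm
    · refine (ch2B_aux P hu'C.1 huC.1 hdu' hdu hss ht.symm ?_).symm
      rw [← ht] at hcard ⊢; exact le_of_eq hcard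
    
lemma Tfib_nonempty_of_tvals {ρ t : ℝ} (ht : t ∈ tvals P ρ) : 1 ≤ (Tfib P ρ t).card := by
  rw [tvals, Finset.mem_image] at ht
  obtain ⟨p, hp, rfl⟩ := ht
  rw [HonP, Finset.mem_filter] at hp
  obtain ⟨_, _, hb1, hb2, _, _⟩ := hp
  exact Finset.card_pos.2 ⟨p.2, Finset.mem_filter.2 ⟨Finset.mem_univ _, hb2, rfl⟩⟩

lemma sum_Tfib_le (ρ : ℝ) :
    (∑ t ∈ tvals P ρ, (Tfib P ρ t).card) ≤ (partnered P ρ).card := by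
  classical
  rw [← Finset.card_biUnion]
  · apply Finset.card_le_card
    intro l hl
    rw [Finset.mem_biUnion] at hl
    obtain ⟨t, htv, hlT⟩ := hl
    rw [Tfib, Finset.mem_filter] at hlT
    obtain ⟨_, hbl, hθl⟩ := hlT
    rw [tvals, Finset.mem_image] at htv
    obtain ⟨p, hp, hpt⟩ := htv
    have hp' := hp
    rw [HonP, Finset.mem_filter] at hp'
    obtain ⟨_, hpne, hb1, hb2, hH, hHe⟩ := hp'
    exact partner_exists P hbl hθl hp ((theta_eq_iff P hb1 hb2 ρ).2 hHe |>.trans hpt) hpt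
  · intro t ht t' ht' htt'
    exact Tfib_disj P htt'

/-- the combined per-point bound in the absence of frozen roots -/
lemma ch_bound_nofz {ρ : ℝ} (hFz : Fz P ρ = ∅) :
    (Ch1 P ρ).ncard + (Ch2 P ρ).ncard ≤ (Zu P ρ).card + (partnered P ρ).card := by
  have h1 := ch1_bound P hFz
  have hsplit : (Ch2 P ρ).ncard ≤
      {u | u ∈ Ch2 P ρ ∧ ¬ Zu P ρ ⊆ Sset P u}.ncard +
      {u | u ∈ Ch2 P ρ ∧ Zu P ρ ⊆ Sset P u}.ncard := by
    refine le_trans (Set.ncard_le_ncard ?_ (Set.toFinite _)) (Set.ncard_union_le _ _)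
    intro u hu
    by_cases h : Zu P ρ ⊆ Sset P u
    · exact Or.inr ⟨hu, h⟩
    · exact Or.inl ⟨hu, h⟩
  have h2 := ch2A_bound P ρ
  have h3 := ch2B_bound P hFz
  have hτ : (tvals P ρ).card = ∑ t ∈ tvals P ρ, 1 := by simp
  have hkey : (tvals P ρ).card + (∑ t ∈ tvals P ρ, ((Tfib P ρ t).card - 1))
      ≤ (partnered P ρ).card := by
    rw [hτ, ← Finset.sum_add_distrib]
    refine le_trans (le_of_eq (Finset.sum_congr rfl ?_)) (sum_Tfib_le P ρ)
    intro t ht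
    have := Tfib_nonempty_of_tvals P ht
    omega
  have hton : ((HonP P ρ).image (fun p => θ P p.2 ρ)).card = (tvals P ρ).card := rfl
  omega

lemma ch_bound_fz (ρ : ℝ) :
    (Ch1 P ρ).ncard + (Ch2 P ρ).ncard ≤ 2 * ((ufz P).card + 1) := by
  have h1 : (Ch1 P ρ).ncard ≤ (W P ρ).ncard :=
    Set.ncard_le_ncard (Set.diff_subset) (Set.toFinite _)
  have h2 : (Ch2 P ρ).ncard ≤ (W P (midR P ρ)).ncard :=
    Set.ncard_le_ncard (Set.diff_subset) (Set.toFinite _)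
  have := W_ncard P ρ
  have := W_ncard P (midR P ρ)
  omega

end count3

section sums
variable (P : Fin n → Polynomial ℝ) (d : ℕ)

lemma ncard_biUnion_le {α : Type*} (s : Finset ℝ) (f : ℝ → Set α) (hf : ∀ x, (f x).Finite) :
    (⋃ x ∈ s, f x).ncard ≤ ∑ x ∈ s, (f x).ncard := by
  classical
  induction s using Finset.induction with
  | empty => simp
  | @insert a s ha ih =>
      rw [Finset.sum_insert ha]
      have hsub : (⋃ x ∈ insert a s, f x) ⊆ f a ∪ ⋃ x ∈ s, f x := by
        intro x hx
        simp only [Set.mem_iUnion, Set.mem_union] at hx ⊢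
        obtain ⟨ρ, hρ, hxρ⟩ := hx
        rcases Finset.mem_insert.1 hρ with rfl | hρ
        · exact Or.inl hxρ
        · exact Or.inr ⟨ρ, hρ, hxρ⟩
      have hfin : (f a ∪ ⋃ x ∈ s, f x).Finite :=
        (hf a).union (Set.Finite.biUnion (Set.finite_mem_finset s) (fun x _ => hf x))
      calc (⋃ x ∈ insert a s, f x).ncard ≤ (f a ∪ ⋃ x ∈ s, f x).ncard :=
            Set.ncard_le_ncard hsub hfin
        _ ≤ (f a).ncard + (⋃ x ∈ s, f x).ncard := Set.ncard_union_le _ _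
        _ ≤ (f a).ncard + ∑ x ∈ s, (f x).ncard := Nat.add_le_add_left ih _

lemma filter_card_le_d {Q : Polynomial ℝ} (hQ : Q ≠ 0) (hd : Q.natDegree ≤ d)
    (s : Finset ℝ) (ψ : ℝ → Prop) [DecidablePred ψ] (hψ : ∀ ρ ∈ s, ψ ρ → Q.eval ρ = 0) :
    (s.filter ψ).card ≤ d := by
  calc (s.filter ψ).card ≤ Q.roots.toFinset.card := by
        apply Finset.card_le_card
        intro x hx
        rw [Finset.mem_filter] at hx
        rw [Multiset.mem_toFinset]
        exact (Polynomial.mem_roots hQ).2 (hψ x hx.1 hx.2)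
    _ ≤ Multiset.card Q.roots := Multiset.toFinset_card_le _
    _ ≤ Q.natDegree := Polynomial.card_roots' Q
    _ ≤ d := hd

lemma Hp_natDegree_le (hdeg : ∀ i, (P i).natDegree ≤ d) (i j : Fin n) : (Hp P i j).natDegree ≤ d := by
  unfold Hp
  refine le_trans (Polynomial.natDegree_sub_le _ _) (max_le ?_ ?_)
  · exact le_trans (Polynomial.natDegree_C_mul_le _ _) (hdeg i)
  · exact le_trans (Polynomial.natDegree_C_mul_le _ _) (hdeg j)

lemma sum_Zu_le (hdeg : ∀ i, (P i).natDegree ≤ d) : ∑ ρ ∈ crit P, (Zu P ρ).card ≤ (ufz P).card * d := by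
  classical
  have hswap : ∑ ρ ∈ crit P, (Zu P ρ).card
      = ∑ i ∈ Finset.univ, ((crit P).filter (fun ρ => bb P i ≠ 0 ∧ (P i).eval ρ = 0)).card := by
    simp only [Zu, Finset.card_filter]
    rw [Finset.sum_comm]
  rw [hswap]
  have hbound : ∀ i ∈ (Finset.univ : Finset (Fin n)),
      ((crit P).filter (fun ρ => bb P i ≠ 0 ∧ (P i).eval ρ = 0)).card
        ≤ if bb P i ≠ 0 then d else 0 := by
    intro i _
    by_cases hbi : bb P i ≠ 0
    · rw [if_pos hbi]
      exact filter_card_le_d d (P_ne_of_uf P hbi) (hdeg i) _ _ (fun ρ _ h => h.2)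
    · rw [if_neg hbi]
      refine le_of_eq ?_
      rw [Finset.card_eq_zero, Finset.filter_eq_empty_iff]
      intro ρ _ h
      exact hbi h.1
  refine le_trans (Finset.sum_le_sum hbound) ?_
  rw [Finset.sum_ite, Finset.sum_const, Finset.sum_const, smul_eq_mul, smul_eq_mul]
  simp only [mul_zero, add_zero]
  apply Nat.mul_le_mul_right
  apply Finset.card_le_card
  intro i hi
  rw [Finset.mem_filter] at hi
  exact Finset.mem_filter.2 ⟨Finset.mem_univ _, hi.2⟩

lemma sum_HonP_le (hdeg : ∀ i, (P i).natDegree ≤ d) : ∑ ρ ∈ crit P, (HonP P ρ).card ≤ (ufz P).card * (ufz P).card * d := by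
  classical
  have hswap : ∑ ρ ∈ crit P, (HonP P ρ).card
      = ∑ q ∈ (Finset.univ : Finset (Fin n × Fin n)),
          ((crit P).filter (fun ρ => q.1 ≠ q.2 ∧ bb P q.1 ≠ 0 ∧ bb P q.2 ≠ 0 ∧
            Hp P q.1 q.2 ≠ 0 ∧ (Hp P q.1 q.2).eval ρ = 0)).card := by
    simp only [HonP, Finset.card_filter]
    rw [Finset.sum_comm]
  rw [hswap]
  have hbound : ∀ q ∈ (Finset.univ : Finset (Fin n × Fin n)),
      ((crit P).filter (fun ρ => q.1 ≠ q.2 ∧ bb P q.1 ≠ 0 ∧ bb P q.2 ≠ 0 ∧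
            Hp P q.1 q.2 ≠ 0 ∧ (Hp P q.1 q.2).eval ρ = 0)).card
        ≤ if bb P q.1 ≠ 0 ∧ bb P q.2 ≠ 0 then d else 0 := by
    intro q _
    by_cases hq : bb P q.1 ≠ 0 ∧ bb P q.2 ≠ 0
    · rw [if_pos hq]
      by_cases hH : Hp P q.1 q.2 = 0
      · refine le_trans (le_of_eq ?_) (Nat.zero_le d)
        rw [Finset.card_eq_zero, Finset.filter_eq_empty_iff]
        intro ρ _ h
        exact h.2.2.2.1 hH
      · exact filter_card_le_d d hH (Hp_natDegree_le P d hdeg q.1 q.2) _ _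
          (fun ρ _ h => h.2.2.2.2)
    · rw [if_neg hq]
      refine le_of_eq ?_
      rw [Finset.card_eq_zero, Finset.filter_eq_empty_iff]
      intro ρ _ h
      exact hq ⟨h.2.1, h.2.2.1⟩
  refine le_trans (Finset.sum_le_sum hbound) ?_
  rw [Finset.sum_ite, Finset.sum_const, Finset.sum_const, smul_eq_mul, smul_eq_mul]
  simp only [mul_zero, add_zero]
  apply Nat.mul_le_mul_right
  have : (Finset.univ.filter (fun q : Fin n × Fin n => bb P q.1 ≠ 0 ∧ bb P q.2 ≠ 0))
      = (ufz P) ×ˢ (ufz P) := by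
    ext q
    simp [ufz, Finset.mem_product]
  rw [this, Finset.card_product]

lemma sum_Fz_le (hdeg : ∀ i, (P i).natDegree ≤ d) : ∑ ρ ∈ crit P, (Fz P ρ).card
    ≤ (Finset.univ.filter (fun i => bb P i = 0)).card * d := by
  classical
  have hswap : ∑ ρ ∈ crit P, (Fz P ρ).card
      = ∑ i ∈ Finset.univ, ((crit P).filter (fun ρ => bb P i = 0 ∧ P i ≠ 0 ∧ (P i).eval ρ = 0)).card := by
    simp only [Fz, Finset.card_filter]
    rw [Finset.sum_comm]
  rw [hswap]
  have hbound : ∀ i ∈ (Finset.univ : Finset (Fin n)),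
      ((crit P).filter (fun ρ => bb P i = 0 ∧ P i ≠ 0 ∧ (P i).eval ρ = 0)).card
        ≤ if bb P i = 0 then d else 0 := by
    intro i _
    by_cases hbi : bb P i = 0
    · rw [if_pos hbi]
      by_cases hP : P i = 0
      · refine le_trans (le_of_eq ?_) (Nat.zero_le d)
        rw [Finset.card_eq_zero, Finset.filter_eq_empty_iff]
        intro ρ _ h
        exact h.2.1 hP
      · exact filter_card_le_d d hP (hdeg i) _ _ (fun ρ _ h => h.2.2)
    · rw [if_neg hbi]
      refine le_of_eq ?_
      rw [Finset.card_eq_zero, Finset.filter_eq_empty_iff]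
      intro ρ _ h
      exact hbi h.1
  refine le_trans (Finset.sum_le_sum hbound) ?_
  rw [Finset.sum_ite, Finset.sum_const, Finset.sum_const, smul_eq_mul, smul_eq_mul]
  simp only [mul_zero, add_zero]
  apply Nat.mul_le_mul_right
  apply Finset.card_le_card
  intro i hi
  rw [Finset.mem_filter] at hi
  exact Finset.mem_filter.2 ⟨Finset.mem_univ _, hi.2⟩

end sums

section final
variable (P : Fin n → Polynomial ℝ)

lemma Uset_ncard_le (d : ℕ) (hdeg : ∀ i, (P i).natDegree ≤ d) :
    (Uset P).ncard ≤ (n^2 + n) * d + n + 1 := by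
  classical
  set p := (ufz P).card with hp
  set z := (Finset.univ.filter (fun i => bb P i = 0)).card with hz
  have hpz : p + z = n := by
    have h1 := Finset.card_filter_add_card_filter_not
      (s := (Finset.univ : Finset (Fin n))) (p := fun i => bb P i ≠ 0)
    have h2 : Finset.univ.filter (fun i => ¬ bb P i ≠ 0)
        = Finset.univ.filter (fun i => bb P i = 0) := by
      apply Finset.filter_congr
      intro i _
      simp only [not_not]
    rw [h2] at h1
    rw [hp, hz, ufz]
    rw [h1, Finset.card_univ, Fintype.card_fin]
  have hper : ∀ ρ ∈ crit P, (Ch1 P ρ ∪ Ch2 P ρ).ncard ≤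
      (Zu P ρ).card + (HonP P ρ).card + 2 * (p + 1) * (Fz P ρ).card := by
    intro ρ _
    refine le_trans (Set.ncard_union_le _ _) ?_
    by_cases hFz : Fz P ρ = ∅
    · have h1 := ch_bound_nofz P hFz
      have h2 := partnered_card_le P ρ
      rw [hFz]
      simp only [Finset.card_empty, mul_zero, add_zero]
      omega
    · have h1 := ch_bound_fz P ρ
      have hge : 1 ≤ (Fz P ρ).card :=
        Finset.card_pos.2 (Finset.nonempty_iff_ne_empty.2 hFz)
      have h3 : 2 * (p+1) * 1 ≤ 2*(p+1)*(Fz P ρ).card :=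
        Nat.mul_le_mul_left _ hge
      rw [← hp] at h1
      omega
  have hW0 := W_ncard P (m0 P)
  rw [← hp] at hW0
  have hcount : (Uset P).ncard ≤ (p + 1) +
      ∑ ρ ∈ crit P, ((Zu P ρ).card + (HonP P ρ).card + 2 * (p + 1) * (Fz P ρ).card) := by
    have hbi := ncard_biUnion_le (crit P) (fun ρ => Ch1 P ρ ∪ Ch2 P ρ)
      (fun x => Set.toFinite _)
    have hsum2 := Finset.sum_le_sum hper
    calc (Uset P).ncard
        ≤ (W P (m0 P) ∪ ⋃ ρ ∈ crit P, (Ch1 P ρ ∪ Ch2 P ρ)).ncard :=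
          Set.ncard_le_ncard (decomp P) (Set.toFinite _)
      _ ≤ (W P (m0 P)).ncard + (⋃ ρ ∈ crit P, (Ch1 P ρ ∪ Ch2 P ρ)).ncard :=
          Set.ncard_union_le _ _
      _ ≤ (p + 1) + ∑ ρ ∈ crit P, (Ch1 P ρ ∪ Ch2 P ρ).ncard := Nat.add_le_add hW0 hbi
      _ ≤ _ := by exact Nat.add_le_add_left hsum2 _
  have hS1 := sum_Zu_le P d hdeg
  have hS2 := sum_HonP_le P d hdeg
  have hS3 := sum_Fz_le P d hdeg
  rw [← hp] at hS1 hS2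
  rw [← hz] at hS3
  have hsum : ∑ ρ ∈ crit P, ((Zu P ρ).card + (HonP P ρ).card + 2 * (p + 1) * (Fz P ρ).card)
      ≤ p * d + p * p * d + 2 * (p + 1) * (z * d) := by
    rw [Finset.sum_add_distrib, Finset.sum_add_distrib, ← Finset.mul_sum]
    have h3 : 2 * (p+1) * (∑ ρ ∈ crit P, (Fz P ρ).card) ≤ 2 * (p + 1) * (z * d) :=
      Nat.mul_le_mul_left _ hS3
    omega
  have harith : (p + 1) + (p * d + p * p * d + 2 * (p + 1) * (z * d))
      ≤ (n^2 + n) * d + n + 1 := by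
    rw [← hpz]
    have hzz : z * d ≤ z * z * d := by
      rcases Nat.eq_zero_or_pos z with h0 | h0
      · rw [h0]
      · exact Nat.mul_le_mul_right d (Nat.le_mul_of_pos_left z h0)
    nlinarith [hzz]
  omega

end final

end S1

/-- for polynomials P_1,…,P_n of degree at most d, the sign vectors
(sgn(P_i(δ) + (1/β − 1)P_i(0)))_i over δ ∈ ℝ and β ∈ (0,1) take at most
(n² + n)d + n + 1 distinct values. -/
theorem stmt1 (n d : ℕ) (P : Fin n → Polynomial ℝ)
    (hdeg : ∀ i, (P i).natDegree ≤ d) :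
    Set.ncard {v : Fin n → Fin 2 |
        ∃ δ : ℝ, ∃ β ∈ Set.Ioo (0:ℝ) 1,
          v = fun i => sgn01 ((P i).eval δ + (1/β - 1) * (P i).eval 0)}
      ≤ (n^2 + n) * d + n + 1 := by
  have hset : {v : Fin n → Fin 2 |
        ∃ δ : ℝ, ∃ β ∈ Set.Ioo (0:ℝ) 1,
          v = fun i => sgn01 ((P i).eval δ + (1/β - 1) * (P i).eval 0)}
      = S1.Uset P := by
    ext v
    constructor
    · rintro ⟨δ, β, ⟨hβ0, hβ1⟩, rfl⟩
      refine ⟨δ, 1/β - 1, ?_, ?_⟩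
      · have h1 : 1 < 1/β := one_lt_one_div hβ0 hβ1
        linarith
      · rfl
    · rintro ⟨δ, c, hc, rfl⟩
      refine ⟨δ, 1/(c+1), ⟨by positivity, ?_⟩, ?_⟩
      · rw [div_lt_one (by linarith)]
        linarith
      · funext i
        have hcc : 1/(1/(c+1)) - 1 = c := by
          rw [one_div_one_div]; ring
        rw [hcc]
        rfl
  rw [hset]
  exact S1.Uset_ncard_le P d hdeg
end

section
/- Let n ≥ 1 and let v_1, ..., v_{2^n} be a Hamiltonian path in the hypercube {0,1}^n (consecutive vertices differ in exactly one coordinate), with b_i ∈ {1,...,n} the coordinate at which v_i and v_{i+1} differ. Let r_1 < r_2 < ... < r_{2^n - 1} be real numbers, and define for each k ∈ {1,...,n} the polynomial P_k(δ) = ∏_{i : b_i = k} (δ - r_i). Then the map δ ↦ (sgn(P_1(δ)), ..., sgn(P_n(δ))) (with sgn(x) = 1 if x ≥ 0 and 0 otherwise) realizes every vector in {0,1}^n as δ ranges over ℝ. -/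
open Polynomial

lemma prod_pos_iff_even (s : Finset ℕ) (f : ℕ → ℝ) (hf : ∀ i ∈ s, f i ≠ 0) :
    (0 < ∏ i ∈ s, f i) ↔ Even (s.filter (fun i => f i < 0)).card := by
  induction s using Finset.induction_on with
  | empty => simp
  | @insert a s ha ih =>
    rw [Finset.prod_insert ha, Finset.filter_insert]
    have hfa := hf a (Finset.mem_insert_self a s)
    have ih' := ih (fun i hi => hf i (Finset.mem_insert_of_mem hi))
    rcases lt_or_gt_of_ne hfa with hneg | hpos
    · rw [if_pos hneg, Finset.card_insert_of_notMem (by simp [ha]), Nat.even_add_one]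
      constructor
      · intro h
        have : ∏ i ∈ s, f i < 0 := by
          by_contra hc
          push_neg at hc
          nlinarith
        intro he
        exact absurd (ih'.2 he) (not_lt.2 this.le)
      · intro h
        have h1 : ¬ (0 < ∏ i ∈ s, f i) := fun hc => h (ih'.1 hc)
        push_neg at h1
        have hne : ∏ i ∈ s, f i ≠ 0 :=
          Finset.prod_ne_zero_iff.2 (fun i hi => hf i (Finset.mem_insert_of_mem hi))
        have : ∏ i ∈ s, f i < 0 := lt_of_le_of_ne h1 hne
        nlinarith
    · rw [if_neg (not_lt.2 hpos.le), ← ih']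
      constructor
      · intro h; nlinarith
      · intro h; nlinarith

lemma e_flip : ∀ x y : Bool, x ≠ y →
    (if y then (1 : Fin 2) else 0) = (if x then 1 else 0) + 1 := by decide

lemma e_inv : ∀ y : Fin 2, (if (decide (y = 1)) then (1 : Fin 2) else 0) = y := by decide

/-- given a Hamiltonian path v_1,…,v_{2^n} in the hypercube {0,1}^n
with b_i the coordinate where v_i and v_{i+1} differ, and reals
r_1 < ⋯ < r_{2^n − 1}, the polynomials P_k(δ) = ∏_{i : b_i = k} (δ − r_i) realize
every sign vector in {0,1}^n as δ ranges over ℝ. -/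
theorem stmt5 (n : ℕ) (hn : 1 ≤ n)
    (v : Fin (2^n) → (Fin n → Bool)) (hv : Function.Bijective v)
    (b : ℕ → Fin n)
    (hb : ∀ i : ℕ, (hi : i + 1 < 2^n) →
      ∀ k : Fin n, (v ⟨i, Nat.lt_of_succ_lt hi⟩ k ≠ v ⟨i + 1, hi⟩ k ↔ k = b i))
    (r : ℕ → ℝ) (hr : StrictMono r)
    (P : Fin n → Polynomial ℝ)
    (hP : ∀ k : Fin n,
      P k = ∏ i ∈ (Finset.range (2^n - 1)).filter (fun i => b i = k),
        (X - C (r i))) :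
    ∀ a : Fin n → Fin 2, ∃ δ : ℝ, ∀ k, sgn01 ((P k).eval δ) = a k := by
  have hpow : 0 < 2^n := Nat.pow_pos (by norm_num)
  -- sample points
  set t : ℕ → ℝ := fun j => if j = 0 then r 0 - 1 else (r (j-1) + r j)/2 with ht_def
  have ht : ∀ j i, t j < r i ↔ j ≤ i := by
    intro j i
    cases j with
    | zero =>
      simp only [ht_def, if_pos rfl]
      constructor
      · intro _; exact Nat.zero_le i
      · intro _
        have : r 0 ≤ r i := hr.monotone (Nat.zero_le i)
        linarith
    | succ m =>
      simp only [ht_def, if_neg (Nat.succ_ne_zero m), Nat.succ_sub_one]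
      constructor
      · intro h
        by_contra hc
        push_neg at hc
        have : r i ≤ r m := hr.monotone (Nat.lt_succ_iff.1 hc)
        have : r m < r (m+1) := hr (Nat.lt_succ_self m)
        linarith
      · intro h
        have h1 : r (m+1) ≤ r i := hr.monotone h
        have : r m < r (m+1) := hr (Nat.lt_succ_self m)
        linarith
  have ht2 : ∀ j i, i < j → r i < t j := by
    intro j i hij
    cases j with
    | zero => omega
    | succ m =>
      simp only [ht_def, if_neg (Nat.succ_ne_zero m), Nat.succ_sub_one]
      have h1 : r i ≤ r m := hr.monotone (Nat.lt_succ_iff.1 hij)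
      have h2 : r m < r (m+1) := hr (Nat.lt_succ_self m)
      linarith
  have htne : ∀ j i, t j ≠ r i := by
    intro j i
    rcases le_or_gt j i with h | h
    · exact ne_of_lt ((ht j i).2 h)
    · exact ne_of_gt (ht2 j i h)
  set F : Fin n → Finset ℕ :=
    fun k => (Finset.range (2^n - 1)).filter (fun i => b i = k) with hF_def
  set N : ℕ → Fin n → ℕ := fun j k => ((F k).filter (fun i => j ≤ i)).card with hN_def
  set w : ℕ → Fin n → Fin 2 := fun j k => sgn01 ((P k).eval (t j)) with hw_def
  -- sign of P_k at t j is given by the parity of N j k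
  have hw : ∀ j k, w j k = if Even (N j k) then 1 else 0 := by
    intro j k
    have heval : (P k).eval (t j) = ∏ i ∈ F k, (t j - r i) := by
      rw [hP k, eval_prod]
      exact Finset.prod_congr rfl (fun i _ => by simp)
    have hfne : ∀ i ∈ F k, t j - r i ≠ 0 := fun i _ => sub_ne_zero.2 (htne j i)
    have hfilt : (F k).filter (fun i => t j - r i < 0) = (F k).filter (fun i => j ≤ i) := by
      apply Finset.filter_congr
      intro i _
      simp only [sub_neg, ht j i]
    have hiff : (0 < (P k).eval (t j)) ↔ Even (N j k) := by
      rw [heval, prod_pos_iff_even (F k) _ hfne, hfilt]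
    have hne : (P k).eval (t j) ≠ 0 := by
      rw [heval]
      exact Finset.prod_ne_zero_iff.2 hfne
    by_cases hpar : Even (N j k)
    · rw [if_pos hpar, hw_def]
      simp only [sgn01, if_pos (le_of_lt (hiff.2 hpar))]
    · rw [if_neg hpar, hw_def]
      have : ¬ (0 < (P k).eval (t j)) := fun hc => hpar (hiff.1 hc)
      push_neg at this
      have hlt : (P k).eval (t j) < 0 := lt_of_le_of_ne this hne
      simp only [sgn01, if_neg (not_le.2 hlt)]
  -- counting step
  have hNstep : ∀ j k, j + 1 < 2^n → N j k = N (j+1) k + (if b j = k then 1 else 0) := by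
    intro j k hj
    have hjrange : j ∈ Finset.range (2^n - 1) := Finset.mem_range.2 (by omega)
    by_cases hbj : b j = k
    · rw [if_pos hbj]
      have hins : (F k).filter (fun i => j ≤ i) = insert j ((F k).filter (fun i => j+1 ≤ i)) := by
        ext i
        simp only [Finset.mem_filter, Finset.mem_insert, hF_def, Finset.mem_range]
        constructor
        · rintro ⟨⟨hir, hbi⟩, hji⟩
          rcases Nat.eq_or_lt_of_le hji with h | h
          · exact Or.inl h.symm
          · exact Or.inr ⟨⟨hir, hbi⟩, h⟩
        · rintro (h | ⟨⟨hir, hbi⟩, hji⟩)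
          · subst h; exact ⟨⟨Finset.mem_range.1 hjrange, hbj⟩, le_refl _⟩
          · exact ⟨⟨hir, hbi⟩, by omega⟩
      show ((F k).filter (fun i => j ≤ i)).card = ((F k).filter (fun i => j+1 ≤ i)).card + 1
      rw [hins, Finset.card_insert_of_notMem (by simp)]
    · rw [if_neg hbj, Nat.add_zero]
      show ((F k).filter (fun i => j ≤ i)).card = ((F k).filter (fun i => j+1 ≤ i)).card
      congr 1
      apply Finset.filter_congr
      intro i hi
      have hbi : b i = k := (Finset.mem_filter.1 hi).2
      have : i ≠ j := fun hc => hbj (hc ▸ hbi)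
      constructor <;> omega
  -- flip step
  have hflip : ∀ j k, j + 1 < 2^n → w (j+1) k = w j k + (if k = b j then 1 else 0) := by
    intro j k hj
    rw [hw j k, hw (j+1) k]
    by_cases hbj : b j = k
    · rw [if_pos hbj.symm]
      have h1 : N j k = N (j+1) k + 1 := by rw [hNstep j k hj, if_pos hbj]
      by_cases hpar : Even (N (j+1) k)
      · rw [if_pos hpar, if_neg (by simp [h1, Nat.even_add_one, hpar])]
        decide
      · rw [if_neg hpar, if_pos (by rw [h1, Nat.even_add_one]; exact hpar)]
        decide
    · have h1 : N j k = N (j+1) k := by rw [hNstep j k hj, if_neg hbj, Nat.add_zero]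
      have hk : ¬ k = b j := fun hc => hbj hc.symm
      rw [h1, if_neg hk, add_zero]
  -- the bookkeeping map e : Bool → Fin 2
  set e : Bool → Fin 2 := fun x => if x then 1 else 0 with he_def
  set d : Fin n → Fin 2 := fun k => w 0 k - e (v ⟨0, hpow⟩ k) with hd_def
  have key : ∀ j (hj : j < 2^n) (k : Fin n), w j k = e (v ⟨j, hj⟩ k) + d k := by
    intro j
    induction j with
    | zero =>
      intro hj k
      rw [hd_def]
      simp only
      abel
    | succ m ih =>
      intro hj k
      have hm : m < 2^n := Nat.lt_of_succ_lt hj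
      rw [hflip m k hj, ih hm k]
      have hstep : e (v ⟨m+1, hj⟩ k) = e (v ⟨m, hm⟩ k) + (if k = b m then 1 else 0) := by
        by_cases hk : k = b m
        · rw [if_pos hk]
          have hne : v ⟨m, hm⟩ k ≠ v ⟨m+1, hj⟩ k := (hb m hj k).2 hk
          exact e_flip _ _ hne
        · rw [if_neg hk, add_zero]
          have heq : v ⟨m, hm⟩ k = v ⟨m+1, hj⟩ k := by
            by_contra hc
            exact hk ((hb m hj k).1 hc)
          rw [heq]
      rw [hstep]
      abel
  -- conclude
  intro a
  obtain ⟨j, hj⟩ := hv.2 (fun k => decide (a k - d k = 1))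
  refine ⟨t j.val, fun k => ?_⟩
  have := key j.val j.isLt k
  rw [hw_def] at this
  simp only at this
  rw [this]
  have hvj : v ⟨j.val, j.isLt⟩ = v j := by congr 1
  rw [hvj, hj]
  simp only [he_def]
  rw [e_inv (a k - d k)]
  abel
end

section
/- Let T ≥ 2 and let 𝒫_D be the family of binary relations ≿_D on ℝ^T parametrized by strictly decreasing functions D : {1,...,T} → (0,1), where x ≿_D y iff Σ_t D(t)x_t ≥ Σ_t D(t)y_t. Then 𝒫_D shatters a set of T − 1 pairs of points; explicitly, for any ε ∈ (0,1), the pairs (x^i, y^i) = ((1−ε)e_i, e_{i+1}) for i = 1, ..., T−1 (with e_i the standard basis vectors) are shattered: for every (a_1,...,a_{T−1}) ∈ {0,1}^{T−1} there is a strictly decreasing D : {1,...,T} → (0,1) such that (1−ε)D(i) ≥ D(i+1) iff a_i = 1. -/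
/-- for T ≥ 2 and ε ∈ (0,1), the T − 1 pairs ((1−ε)e_i, e_{i+1}) are
shattered by the discounted utility model: for every label vector a ∈ {0,1}^{T−1}
there exists a strictly decreasing D : {1,…,T} → (0,1) with
(1−ε)·D(i) ≥ D(i+1) iff a_i = 1. -/
theorem stmt8 (T : ℕ) (hT : 2 ≤ T) (ε : ℝ) (hε : ε ∈ Set.Ioo (0:ℝ) 1) :
    ∀ a : Fin (T - 1) → Bool,
      ∃ D : ℕ → ℝ,
        (∀ t ∈ Set.Icc 1 T, D t ∈ Set.Ioo (0:ℝ) 1) ∧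
        (StrictAntiOn D (Set.Icc 1 T)) ∧
        (∀ i : Fin (T - 1),
          ((1 - ε) * D (i.val + 1) ≥ D (i.val + 2) ↔ a i = true)) := by
  obtain ⟨hε0, hε1⟩ := hε
  intro a
  set r : ℕ → ℝ := fun n =>
    if h : n < T - 1 then (if a ⟨n, h⟩ then 1 - ε else 1 - ε / 2) else 1 - ε with hr
  have hrpos : ∀ n, 0 < r n := by
    intro n
    simp only [hr]
    split_ifs <;> linarith
  have hrlt : ∀ n, r n < 1 := by
    intro n
    simp only [hr]
    split_ifs <;> linarith
  set g : ℕ → ℝ := fun n => (1 / 2) * ∏ k ∈ Finset.range n, r k with hg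
  have hgpos : ∀ n, 0 < g n := by
    intro n
    have : 0 < ∏ k ∈ Finset.range n, r k := Finset.prod_pos (fun k _ => hrpos k)
    simp only [hg]; positivity
  have hgsucc : ∀ n, g (n + 1) = g n * r n := by
    intro n
    simp only [hg, Finset.prod_range_succ, mul_assoc]
  have hganti : StrictAnti g := by
    apply strictAnti_nat_of_succ_lt
    intro n
    rw [hgsucc n]
    have := hgpos n
    nlinarith [hrlt n]
  have hglt1 : ∀ n, g n < 1 := by
    intro n
    have h0 : g n ≤ g 0 := hganti.antitone (Nat.zero_le n)
    have h1 : g 0 < 1 := by simp [hg]; norm_num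
    exact lt_of_le_of_lt h0 h1
  refine ⟨fun t => g (t - 1), ?_, ?_, ?_⟩
  · intro t _
    exact ⟨hgpos _, hglt1 _⟩
  · intro m hm n hn hmn
    exact hganti (Nat.sub_lt_sub_right hm.1 hmn)
  · intro i
    have hi : i.val < T - 1 := i.isLt
    have hr1 : r i.val = if a i then 1 - ε else 1 - ε / 2 := by
      simp only [hr, dif_pos hi, Fin.eta]
    have e1 : (i.val + 1 : ℕ) - 1 = i.val := by omega
    have e2 : (i.val + 2 : ℕ) - 1 = i.val + 1 := by omega
    show (1 - ε) * g (i.val + 1 - 1) ≥ g (i.val + 2 - 1) ↔ a i = true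
    rw [e1, e2, hgsucc]
    have hgp := hgpos i.val
    constructor
    · intro h
      by_contra hfalse
      rw [Bool.not_eq_true] at hfalse
      rw [hr1, hfalse] at h
      simp at h
      nlinarith
    · intro h
      rw [hr1, h]
      simp
      nlinarith
end
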